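/- arXiv:1802.07973 — 5 statements merged into one kernel-verified Lean document; each statement's English description precedes it below -/
import Mathlib

section
/- The function Θ_m(ξ) := 2^{2γ} |Γ(A_m + iξ/2)|² / |Γ(B_m + iξ/2)|², where A_m = 1/2 + γ/2 + (1/2)√((N/2-1)² + μ_m) and B_m = 1/2 - γ/2 + (1/2)√((N/2-1)² + μ_m), is strictly increasing in ξ on (0, ∞). -/
open Finset Filter Complex Topology Nat

private lemma gammaSeq_absSq (a t : ℝ) (n : ℕ) (hn : 0 < n) :
    ‖Complex.GammaSeq ((a : ℂ) + (t : ℂ) * Complex.I) n‖ ^ 2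
      = ((n : ℝ) ^ a * (Nat.factorial n : ℝ)) ^ 2 /
        ∏ j ∈ Finset.range (n + 1), ((a + j) ^ 2 + t ^ 2) := by
  have h1 : ‖(n : ℂ) ^ ((a : ℂ) + (t : ℂ) * Complex.I)‖ = (n : ℝ) ^ a := by
    rw [show ((n : ℂ)) = (((n : ℝ)) : ℂ) by norm_cast,
      Complex.norm_cpow_eq_rpow_re_of_pos (by exact_mod_cast hn)]
    norm_num
  have h2 : ∀ j : ℕ, ‖(a : ℂ) + (t : ℂ) * Complex.I + (j : ℂ)‖ ^ 2
      = (a + j) ^ 2 + t ^ 2 := by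
    intro j
    rw [Complex.sq_norm, Complex.normSq_apply]
    simp
    ring
  have h3 : ‖((Nat.factorial n : ℕ) : ℂ)‖ = (Nat.factorial n : ℝ) :=
    Complex.norm_natCast _
  have h4 : (∏ j ∈ Finset.range (n + 1),
      ‖(a : ℂ) + (t : ℂ) * Complex.I + (j : ℂ)‖ ^ 2)
      = ∏ j ∈ Finset.range (n + 1), ((a + j) ^ 2 + t ^ 2) :=
    Finset.prod_congr rfl fun j _ => h2 j
  rw [Complex.GammaSeq, norm_div, norm_mul, norm_prod, h1, h3, div_pow, mul_pow,
    ← Finset.prod_pow, h4]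

private lemma key (A B t₁ t₂ : ℝ) (hB : 0 < B) (hAB : B < A) (ht1 : 0 < t₁)
    (ht12 : t₁ < t₂) :
    ‖Complex.Gamma ((A : ℂ) + (t₁ : ℂ) * Complex.I)‖ ^ 2 *
      ‖Complex.Gamma ((B : ℂ) + (t₂ : ℂ) * Complex.I)‖ ^ 2 <
    ‖Complex.Gamma ((A : ℂ) + (t₂ : ℂ) * Complex.I)‖ ^ 2 *
      ‖Complex.Gamma ((B : ℂ) + (t₁ : ℂ) * Complex.I)‖ ^ 2 := by
  have hA : 0 < A := hB.trans hAB
  have ht2 : 0 < t₂ := ht1.trans ht12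
  set u : ℕ → ℝ := fun j => ((A + j) ^ 2 + t₁ ^ 2) * ((B + j) ^ 2 + t₂ ^ 2) with hu
  set v : ℕ → ℝ := fun j => ((A + j) ^ 2 + t₂ ^ 2) * ((B + j) ^ 2 + t₁ ^ 2) with hv
  have hupos : ∀ j, 0 < u j := fun j =>
    mul_pos (add_pos_of_nonneg_of_pos (sq_nonneg _) (pow_pos ht1 2))
      (add_pos_of_nonneg_of_pos (sq_nonneg _) (pow_pos ht2 2))
  have hvpos : ∀ j, 0 < v j := fun j =>
    mul_pos (add_pos_of_nonneg_of_pos (sq_nonneg _) (pow_pos ht2 2))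
      (add_pos_of_nonneg_of_pos (sq_nonneg _) (pow_pos ht1 2))
  have hvu : ∀ j : ℕ, v j ≤ u j := by
    intro j
    have hj : (0 : ℝ) ≤ (j : ℝ) := Nat.cast_nonneg j
    have hid : u j - v j = (t₂ ^ 2 - t₁ ^ 2) * ((A + j) ^ 2 - (B + j) ^ 2) := by
      simp only [hu, hv]; ring
    have h1 : 0 ≤ t₂ ^ 2 - t₁ ^ 2 := by nlinarith
    have h2 : 0 ≤ (A + j) ^ 2 - (B + j) ^ 2 := by nlinarith
    nlinarith [mul_nonneg h1 h2]
  have hv0u0 : v 0 < u 0 := by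
    have hid : u 0 - v 0 = (t₂ ^ 2 - t₁ ^ 2) * (A ^ 2 - B ^ 2) := by
      simp only [hu, hv]; push_cast; ring
    have h1 : 0 < t₂ ^ 2 - t₁ ^ 2 := by nlinarith
    have h2 : 0 < A ^ 2 - B ^ 2 := by nlinarith
    nlinarith [mul_pos h1 h2]
  -- finite product inequality
  have hprod : ∀ n : ℕ, u 0 * ∏ j ∈ Finset.range (n + 1), v j ≤
      v 0 * ∏ j ∈ Finset.range (n + 1), u j := by
    intro n
    rw [Finset.prod_range_succ', Finset.prod_range_succ']
    have h : ∏ i ∈ Finset.range n, v (i + 1) ≤ ∏ i ∈ Finset.range n, u (i + 1) :=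
      Finset.prod_le_prod (fun i _ => (hvpos _).le) (fun i _ => hvu _)
    have hPv : 0 ≤ ∏ i ∈ Finset.range n, v (i + 1) :=
      Finset.prod_nonneg fun i _ => (hvpos _).le
    nlinarith [hupos 0, hvpos 0, mul_pos (hupos 0) (hvpos 0)]
  -- sequences
  set F : ℕ → ℝ := fun n =>
    ‖Complex.GammaSeq ((A : ℂ) + (t₂ : ℂ) * Complex.I) n‖ ^ 2 *
      ‖Complex.GammaSeq ((B : ℂ) + (t₁ : ℂ) * Complex.I) n‖ ^ 2 with hF
  set G : ℕ → ℝ := fun n =>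
    ‖Complex.GammaSeq ((A : ℂ) + (t₁ : ℂ) * Complex.I) n‖ ^ 2 *
      ‖Complex.GammaSeq ((B : ℂ) + (t₂ : ℂ) * Complex.I) n‖ ^ 2 with hG
  have hFG : ∀ n : ℕ, 1 ≤ n → u 0 * G n ≤ F n * v 0 := by
    intro n hn
    have hn' : 0 < n := hn
    have e1 := gammaSeq_absSq A t₂ n hn'
    have e2 := gammaSeq_absSq B t₁ n hn'
    have e3 := gammaSeq_absSq A t₁ n hn'
    have e4 := gammaSeq_absSq B t₂ n hn'
    rw [hF, hG]
    simp only [e1, e2, e3, e4]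
    set Ca : ℝ := ((n : ℝ) ^ A * (Nat.factorial n : ℝ)) ^ 2 with hCa
    set Cb : ℝ := ((n : ℝ) ^ B * (Nat.factorial n : ℝ)) ^ 2 with hCb
    have hCapos : 0 < Ca := by
      apply pow_pos
      exact mul_pos (Real.rpow_pos_of_pos (by exact_mod_cast hn') A)
        (by exact_mod_cast Nat.factorial_pos n)
    have hCbpos : 0 < Cb := by
      apply pow_pos
      exact mul_pos (Real.rpow_pos_of_pos (by exact_mod_cast hn') B)
        (by exact_mod_cast Nat.factorial_pos n)
    have hPA1 : 0 < ∏ j ∈ Finset.range (n + 1), ((A + j) ^ 2 + t₁ ^ 2) :=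
      Finset.prod_pos fun j _ =>
        add_pos_of_nonneg_of_pos (sq_nonneg _) (pow_pos ht1 2)
    have hPA2 : 0 < ∏ j ∈ Finset.range (n + 1), ((A + j) ^ 2 + t₂ ^ 2) :=
      Finset.prod_pos fun j _ =>
        add_pos_of_nonneg_of_pos (sq_nonneg _) (pow_pos ht2 2)
    have hPB1 : 0 < ∏ j ∈ Finset.range (n + 1), ((B + j) ^ 2 + t₁ ^ 2) :=
      Finset.prod_pos fun j _ =>
        add_pos_of_nonneg_of_pos (sq_nonneg _) (pow_pos ht1 2)
    have hPB2 : 0 < ∏ j ∈ Finset.range (n + 1), ((B + j) ^ 2 + t₂ ^ 2) :=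
      Finset.prod_pos fun j _ =>
        add_pos_of_nonneg_of_pos (sq_nonneg _) (pow_pos ht2 2)
    have hPu : (∏ j ∈ Finset.range (n + 1), ((A + j) ^ 2 + t₁ ^ 2)) *
        (∏ j ∈ Finset.range (n + 1), ((B + j) ^ 2 + t₂ ^ 2)) =
        ∏ j ∈ Finset.range (n + 1), u j := by
      rw [← Finset.prod_mul_distrib]
    have hPv : (∏ j ∈ Finset.range (n + 1), ((A + j) ^ 2 + t₂ ^ 2)) *
        (∏ j ∈ Finset.range (n + 1), ((B + j) ^ 2 + t₁ ^ 2)) =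
        ∏ j ∈ Finset.range (n + 1), v j := by
      rw [← Finset.prod_mul_distrib]
    have e5 : Ca / (∏ j ∈ Finset.range (n + 1), ((A + j) ^ 2 + t₁ ^ 2)) *
        (Cb / (∏ j ∈ Finset.range (n + 1), ((B + j) ^ 2 + t₂ ^ 2))) =
        Ca * Cb / ∏ j ∈ Finset.range (n + 1), u j := by
      rw [_root_.div_mul_div_comm, hPu]
    have e6 : Ca / (∏ j ∈ Finset.range (n + 1), ((A + j) ^ 2 + t₂ ^ 2)) *
        (Cb / (∏ j ∈ Finset.range (n + 1), ((B + j) ^ 2 + t₁ ^ 2))) =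
        Ca * Cb / ∏ j ∈ Finset.range (n + 1), v j := by
      rw [_root_.div_mul_div_comm, hPv]
    rw [e5, e6, ← mul_div_assoc, div_mul_eq_mul_div,
      div_le_div_iff₀ (by rw [← hPu]; positivity) (by rw [← hPv]; positivity)]
    calc u 0 * (Ca * Cb) * ∏ j ∈ Finset.range (n + 1), v j
        = (Ca * Cb) * (u 0 * ∏ j ∈ Finset.range (n + 1), v j) := by ring
      _ ≤ (Ca * Cb) * (v 0 * ∏ j ∈ Finset.range (n + 1), u j) :=
          mul_le_mul_of_nonneg_left (hprod n) (mul_pos hCapos hCbpos).le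
      _ = Ca * Cb * v 0 * ∏ j ∈ Finset.range (n + 1), u j := by ring
  -- limits
  have habs : ∀ z : ℂ, Tendsto (fun n => ‖Complex.GammaSeq z n‖ ^ 2) atTop
      (𝓝 (‖Complex.Gamma z‖ ^ 2)) := fun z =>
    ((continuous_norm.tendsto _).comp (Complex.GammaSeq_tendsto_Gamma z)).pow 2
  set LA1 := ‖Complex.Gamma ((A : ℂ) + (t₁ : ℂ) * Complex.I)‖ ^ 2
  set LA2 := ‖Complex.Gamma ((A : ℂ) + (t₂ : ℂ) * Complex.I)‖ ^ 2
  set LB1 := ‖Complex.Gamma ((B : ℂ) + (t₁ : ℂ) * Complex.I)‖ ^ 2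
  set LB2 := ‖Complex.Gamma ((B : ℂ) + (t₂ : ℂ) * Complex.I)‖ ^ 2
  have hLF : Tendsto (fun n => F n * v 0) atTop (𝓝 (LA2 * LB1 * v 0)) :=
    (Tendsto.mul (habs _) (habs _)).mul_const _
  have hLG : Tendsto (fun n => u 0 * G n) atTop (𝓝 (u 0 * (LA1 * LB2))) :=
    (Tendsto.mul (habs _) (habs _)).const_mul _
  have hle : u 0 * (LA1 * LB2) ≤ LA2 * LB1 * v 0 := by
    refine le_of_tendsto_of_tendsto hLG hLF ?_
    filter_upwards [eventually_ge_atTop 1] with n hn using hFG n hn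
  -- Gamma values are nonzero
  have hGne : ∀ (a : ℝ), 0 < a → ∀ (t : ℝ),
      Complex.Gamma ((a : ℂ) + (t : ℂ) * Complex.I) ≠ 0 := by
    intro a ha t
    apply Complex.Gamma_ne_zero_of_re_pos
    simp [ha]
  have hLA1 : 0 < LA1 := pow_pos (norm_pos_iff.mpr (hGne A hA t₁)) 2
  have hLB2 : 0 < LB2 := pow_pos (norm_pos_iff.mpr (hGne B hB t₂)) 2
  have hG0 : 0 < LA1 * LB2 := mul_pos hLA1 hLB2
  have : v 0 * (LA1 * LB2) < LA2 * LB1 * v 0 :=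
    lt_of_lt_of_le (by nlinarith) hle
  have hv0 := hvpos 0
  nlinarith

/-- The symbol `Θ_m(ξ) = 2^{2γ} |Γ(A_m + iξ/2)|²/|Γ(B_m + iξ/2)|²`, with
`A_m = 1/2 + γ/2 + √((N/2-1)² + μ_m)/2` and `B_m = 1/2 - γ/2 + √((N/2-1)² + μ_m)/2`,
is strictly increasing in `ξ ∈ (0, ∞)`. -/
theorem stmt9 (N : ℕ) (hN : 2 ≤ N) (γ μ A B : ℝ) (hγ0 : 0 < γ)
    (hγN : γ < (N : ℝ) / 2) (hμ : 0 ≤ μ)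
    (hA : A = 1 / 2 + γ / 2 + Real.sqrt (((N : ℝ) / 2 - 1) ^ 2 + μ) / 2)
    (hB : B = 1 / 2 - γ / 2 + Real.sqrt (((N : ℝ) / 2 - 1) ^ 2 + μ) / 2) :
    StrictMonoOn
      (fun ξ : ℝ =>
        (2 : ℝ) ^ (2 * γ) *
          ‖Complex.Gamma ((A : ℂ) + (ξ : ℂ) / 2 * Complex.I)‖ ^ 2 /
          ‖Complex.Gamma ((B : ℂ) + (ξ : ℂ) / 2 * Complex.I)‖ ^ 2)
      (Set.Ioi 0) := by
  have hNR : (2 : ℝ) ≤ (N : ℝ) := by exact_mod_cast hN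
  have h0 : (0 : ℝ) ≤ (N : ℝ) / 2 - 1 := by linarith
  have hsq : (N : ℝ) / 2 - 1 ≤ Real.sqrt (((N : ℝ) / 2 - 1) ^ 2 + μ) := by
    calc (N : ℝ) / 2 - 1 = Real.sqrt (((N : ℝ) / 2 - 1) ^ 2) := (Real.sqrt_sq h0).symm
      _ ≤ _ := Real.sqrt_le_sqrt (by linarith)
  have hB0 : 0 < B := by rw [hB]; linarith
  have hAB : B < A := by rw [hA, hB]; linarith
  intro ξ₁ h1 ξ₂ h2 hlt
  simp only [Set.mem_Ioi] at h1 h2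
  have hcast : ∀ ξ : ℝ, ((ξ : ℂ)) / 2 = ((ξ / 2 : ℝ) : ℂ) := by intro ξ; push_cast; ring
  simp only [hcast]
  have hk := key A B (ξ₁ / 2) (ξ₂ / 2) hB0 hAB (by linarith) (by linarith)
  have hGne : ∀ (a : ℝ), 0 < a → ∀ (t : ℝ),
      Complex.Gamma ((a : ℂ) + (t : ℂ) * Complex.I) ≠ 0 := by
    intro a ha t
    apply Complex.Gamma_ne_zero_of_re_pos
    simp [ha]
  have hb1 : 0 < ‖Complex.Gamma ((B : ℂ) + ((ξ₁ / 2 : ℝ) : ℂ) * Complex.I)‖ ^ 2 :=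
    pow_pos (norm_pos_iff.mpr (hGne B hB0 _)) 2
  have hb2 : 0 < ‖Complex.Gamma ((B : ℂ) + ((ξ₂ / 2 : ℝ) : ℂ) * Complex.I)‖ ^ 2 :=
    pow_pos (norm_pos_iff.mpr (hGne B hB0 _)) 2
  rw [div_lt_div_iff₀ hb1 hb2]
  have hc : (0 : ℝ) < (2 : ℝ) ^ (2 * γ) := Real.rpow_pos_of_pos (by norm_num) _
  nlinarith
end

section
/- The residue of the reciprocal symbol at the j-th pole equals c_j = (2/2^{2γ}) · Γ(1-γ+√((n/2-1)²+μ_m)+j) / (Γ(γ-j) Γ(1+√((n/2-1)²+μ_m)+j)) · (-i)(-1)^j/j!, and by Stirling's formula |c_j| ≍ C j^{-2γ} as j → ∞; in particular the series Σ_j c_j e^{-σ_j t} converges absolutely for every t > 0. -/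
open Filter Finset

/-- The poles `σ_j = 2(B_m + j)` of the reciprocal symbol, where
`B_m = 1/2 - γ/2 + s/2` and `s = √((n/2-1)² + μ_m)`. -/
noncomputable def sigma13 (γ s : ℝ) (j : ℕ) : ℝ :=
  2 * ((1 / 2 - γ / 2 + s / 2) + (j : ℝ))

/-- The meromorphic extension of the symbol `Θ_m` (with `κ = 0`). -/
noncomputable def Theta13 (γ s : ℝ) (z : ℂ) : ℂ :=
  (((2 : ℝ) ^ (2 * γ) : ℝ) : ℂ) *
      Complex.Gamma (((1 / 2 + γ / 2 + s / 2 : ℝ) : ℂ) + z / 2 * Complex.I) *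
      Complex.Gamma (((1 / 2 + γ / 2 + s / 2 : ℝ) : ℂ) - z / 2 * Complex.I) /
    (Complex.Gamma (((1 / 2 - γ / 2 + s / 2 : ℝ) : ℂ) + z / 2 * Complex.I) *
      Complex.Gamma (((1 / 2 - γ / 2 + s / 2 : ℝ) : ℂ) - z / 2 * Complex.I))

/-- The claimed residue of `1/Θ_m` at the `j`-th pole. -/
noncomputable def res13 (γ s : ℝ) (j : ℕ) : ℂ :=
  ((2 / (2 : ℝ) ^ (2 * γ) * Real.Gamma (1 - γ + s + (j : ℝ)) /
      (Real.Gamma (γ - (j : ℝ)) * Real.Gamma (1 + s + (j : ℝ))) *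
      (-1 : ℝ) ^ j / (j.factorial : ℝ) : ℝ) : ℂ) * (-Complex.I)

lemma aux13_gamma_shiftC (x : ℂ) (m : ℕ) (hx : ∀ k : ℕ, k < m → x + k ≠ 0) :
    Complex.Gamma (x + m) = (∏ k ∈ Finset.range m, (x + k)) * Complex.Gamma x := by
  induction m with
  | zero => simp
  | succ m ih =>
    have h1 : x + ((m + 1 : ℕ) : ℂ) = (x + m) + 1 := by push_cast; ring
    rw [h1, Complex.Gamma_add_one _ (hx m (Nat.lt_succ_self m)),
      ih (fun k hk => hx k (hk.trans (Nat.lt_succ_self m))), Finset.prod_range_succ]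
    ring

lemma aux13_gamma_shiftR (x : ℝ) (m : ℕ) (hx : ∀ k : ℕ, k < m → x + k ≠ 0) :
    Real.Gamma (x + m) = (∏ k ∈ Finset.range m, (x + k)) * Real.Gamma x := by
  induction m with
  | zero => simp
  | succ m ih =>
    have h1 : x + ((m + 1 : ℕ) : ℝ) = (x + m) + 1 := by push_cast; ring
    rw [h1, Real.Gamma_add_one (hx m (Nat.lt_succ_self m)),
      ih (fun k hk => hx k (hk.trans (Nat.lt_succ_self m))), Finset.prod_range_succ]
    ring

lemma aux13_prod_neg (j : ℕ) :
    (∏ k ∈ Finset.range j, ((k : ℂ) - j)) = (-1) ^ j * j.factorial := by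
  have h := Finset.prod_range_reflect (fun k => ((k : ℂ) - j)) j
  rw [← h]
  have h2 : ∀ k ∈ Finset.range j, (((j - 1 - k : ℕ) : ℂ) - j) = -((k : ℂ) + 1) := by
    intro k hk
    rw [Finset.mem_range] at hk
    have : ((j - 1 - k : ℕ) : ℂ) = (j : ℂ) - 1 - k := by
      have h1j : 1 ≤ j := Nat.one_le_of_lt (Nat.lt_of_le_of_lt (Nat.zero_le k) hk)
      push_cast [Nat.cast_sub (Nat.le_sub_one_of_lt hk), Nat.cast_sub h1j]
      ring
    rw [this]; ring
  rw [Finset.prod_congr rfl h2]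
  rw [show (fun k : ℕ => -((k : ℂ) + 1)) = fun k : ℕ => (-1) * ((k : ℂ) + 1) by funext k; ring]
  rw [Finset.prod_mul_distrib, Finset.prod_const]
  congr 1
  · simp
  · rw [← Finset.prod_range_add_one_eq_factorial j]
    push_cast
    rfl

lemma aux13_gammaRes (j : ℕ) :
    Tendsto (fun ζ : ℂ => (ζ + j) * Complex.Gamma ζ)
      (nhdsWithin (-(j : ℂ)) {(-(j : ℂ))}ᶜ)
      (nhds ((-1) ^ j / (j.factorial : ℂ))) := by
  set g : ℂ → ℂ := fun ζ => Complex.Gamma (ζ + (j + 1)) / ∏ k ∈ Finset.range j, (ζ + k)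
    with hg
  have hprod : (∏ k ∈ Finset.range j, ((-(j : ℂ)) + k)) = (-1) ^ j * j.factorial := by
    rw [← aux13_prod_neg j]
    exact Finset.prod_congr rfl fun k _ => by ring
  have hprod_ne : (∏ k ∈ Finset.range j, ((-(j : ℂ)) + k)) ≠ 0 := by
    rw [hprod]
    exact mul_ne_zero (pow_ne_zero _ (by norm_num)) (Nat.cast_ne_zero.mpr j.factorial_ne_zero)
  have hcont : ContinuousAt g (-(j : ℂ)) := by
    apply ContinuousAt.div
    · exact (Complex.differentiableAt_Gamma _ (by
        intro m
        rw [show (-(j:ℂ)) + ((j:ℂ) + 1) = 1 by ring]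
        intro hm
        have : (1 : ℝ) = -(m : ℝ) := by exact_mod_cast hm
        nlinarith [Nat.cast_nonneg (α := ℝ) m])).continuousAt.comp
        (by fun_prop)
    · fun_prop
    · exact hprod_ne
  have hgval : g (-(j : ℂ)) = (-1) ^ j / (j.factorial : ℂ) := by
    rw [hg]
    simp only
    rw [show (-(j:ℂ)) + ((j:ℂ) + 1) = 1 by ring, Complex.Gamma_one, hprod]
    have hi : ((-1 : ℂ) ^ j)⁻¹ = (-1) ^ j := by rw [← inv_pow, inv_neg, inv_one]
    rw [one_div, mul_inv, hi, div_eq_mul_inv]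
  have heq : ∀ᶠ ζ in nhdsWithin (-(j : ℂ)) {(-(j : ℂ))}ᶜ,
      (ζ + j) * Complex.Gamma ζ = g ζ := by
    have hball : ∀ᶠ ζ in nhdsWithin (-(j : ℂ)) {(-(j : ℂ))}ᶜ,
        ζ ∈ Metric.ball (-(j : ℂ)) (1/2) :=
      eventually_nhdsWithin_of_eventually_nhds
        (Metric.ball_mem_nhds _ (by norm_num : (0:ℝ) < 1/2))
    filter_upwards [hball, self_mem_nhdsWithin] with ζ hζb hζn
    have hζj : ζ + j ≠ 0 := by
      intro h
      exact hζn (Set.mem_singleton_iff.mpr (by linear_combination h))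
    have hne : ∀ k : ℕ, k < j + 1 → ζ + k ≠ 0 := by
      intro k hk
      rcases Nat.lt_succ_iff_lt_or_eq.mp hk with hk' | rfl
      · intro h0
        have h1 : ζ = -(k : ℂ) := by linear_combination h0
        have : dist ζ (-(j:ℂ)) = ((j : ℝ) - k) := by
          rw [h1, Complex.dist_eq]
          rw [show (-(k:ℂ)) - (-(j:ℂ)) = ((((j:ℝ) - k : ℝ)):ℂ) by push_cast; ring]
          rw [Complex.norm_real, Real.norm_eq_abs, abs_of_nonneg]
          have : (k : ℝ) ≤ j := by exact_mod_cast hk'.le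
          linarith
        have hd := Metric.mem_ball.mp hζb
        rw [this] at hd
        have : (k : ℝ) + 1 ≤ j := by exact_mod_cast hk'
        linarith
      · exact hζj
    have := aux13_gamma_shiftC ζ (j + 1) hne
    rw [hg]
    simp only
    rw [show ζ + ((j:ℂ) + 1) = ζ + ((j + 1 : ℕ) : ℂ) by push_cast; ring, this,
      Finset.prod_range_succ]
    rw [eq_div_iff (Finset.prod_ne_zero_iff.mpr fun k hk =>
      hne k (by rw [Finset.mem_range] at hk; omega))]
    ring
  refine Tendsto.congr' (heq.mono fun ζ h => h.symm) ?_
  rw [← hgval]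
  exact hcont.continuousWithinAt

lemma aux13_ratio_tendsto {x : ℝ} (hx : -1 < x) :
    Tendsto (fun n : ℕ => Real.Gamma (x + n + 1) / ((n.factorial : ℝ) * (n : ℝ) ^ x))
      atTop (nhds 1) := by
  rcases eq_or_ne x 0 with rfl | hx0
  · apply Tendsto.congr (f₁ := fun _ : ℕ => (1 : ℝ)) ?_ tendsto_const_nhds
    intro n
    rw [Real.rpow_zero, mul_one, zero_add, Real.Gamma_nat_eq_factorial, eq_comm,
      div_eq_one_iff_eq (Nat.cast_ne_zero.mpr n.factorial_ne_zero)]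
  · have hΓ : Real.Gamma x ≠ 0 := by
      apply Real.Gamma_ne_zero
      intro m
      match m with
      | 0 => simpa using hx0
      | (m+1) =>
        intro h
        rw [h] at hx
        have : (1 : ℝ) ≤ (m + 1 : ℕ) := by exact_mod_cast Nat.one_le_iff_ne_zero.mpr (Nat.succ_ne_zero m)
        push_cast at hx this
        linarith
    have key : ∀ n : ℕ, Real.Gamma (x + n + 1) / ((n.factorial : ℝ) * (n : ℝ) ^ x)
        = Real.Gamma x / Real.GammaSeq x n := by
      intro n
      have hshift := aux13_gamma_shiftR x (n + 1) (by
        intro k hk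
        match k with
        | 0 => simpa using hx0
        | (k+1) =>
          have : (1 : ℝ) ≤ ((k+1 : ℕ) : ℝ) := by exact_mod_cast Nat.one_le_iff_ne_zero.mpr (Nat.succ_ne_zero k)
          have : 0 < x + ((k+1 : ℕ) : ℝ) := by linarith
          exact this.ne')
      rw [Real.GammaSeq, show x + (n : ℝ) + 1 = x + ((n + 1 : ℕ) : ℝ) by push_cast; ring,
        hshift, div_div_eq_mul_div]
      push_cast
      ring
    refine Tendsto.congr (fun n => (key n).symm) ?_
    have h2 := (tendsto_const_nhds (x := Real.Gamma x) (f := atTop (α := ℕ))).div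
      (Real.GammaSeq_tendsto_Gamma x) hΓ
    rw [div_self hΓ] at h2
    exact h2

lemma aux13_res_formula (γ s : ℝ) (hγ0 : 0 < γ) (hγ1 : γ < 1) (hs0 : 0 ≤ s) (j : ℕ) :
    ‖res13 γ s j‖
      = (2 * Real.sin (Real.pi * γ) / ((2:ℝ) ^ (2*γ) * Real.pi)) *
        (Real.Gamma (1 - γ + s + j) * Real.Gamma (1 - γ + j) /
          (Real.Gamma (1 + s + j) * j.factorial)) := by
  have hπ := Real.pi_pos
  have hj0 : (0:ℝ) ≤ (j:ℝ) := Nat.cast_nonneg j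
  have hsin : 0 < Real.sin (Real.pi * γ) :=
    Real.sin_pos_of_pos_of_lt_pi (by positivity) (by nlinarith)
  have hΓ2 : 0 < Real.Gamma (1 - γ + j) := Real.Gamma_pos_of_pos (by linarith)
  have hΓ1 : 0 < Real.Gamma (1 - γ + s + j) := Real.Gamma_pos_of_pos (by linarith)
  have hΓ3 : 0 < Real.Gamma (1 + s + j) := Real.Gamma_pos_of_pos (by linarith)
  have hfac : (0:ℝ) < (j.factorial : ℝ) := by exact_mod_cast j.factorial_pos
  have h2γ : (0:ℝ) < (2:ℝ) ^ (2*γ) := Real.rpow_pos_of_pos two_pos _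
  have hrefl : Real.Gamma (γ - j) * Real.Gamma (1 - γ + j)
      = (-1)^j * Real.pi / Real.sin (Real.pi * γ) := by
    have h0 := Real.Gamma_mul_Gamma_one_sub (γ - j)
    rw [show (1:ℝ) - (γ - j) = 1 - γ + j by ring] at h0
    rw [show Real.pi * (γ - (j:ℝ)) = Real.pi * γ - (j:ℕ) * Real.pi by ring,
      Real.sin_sub_nat_mul_pi] at h0
    rw [h0]
    rcases Nat.even_or_odd j with h | h
    · rw [h.neg_one_pow]; ring
    · rw [h.neg_one_pow]; field_simp
  have hΓγ : Real.Gamma (γ - j)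
      = (-1)^j * Real.pi / (Real.sin (Real.pi*γ) * Real.Gamma (1 - γ + j)) := by
    rw [eq_div_iff (by positivity)]
    calc Real.Gamma (γ - j) * (Real.sin (Real.pi*γ) * Real.Gamma (1 - γ + j))
        = Real.sin (Real.pi*γ) * (Real.Gamma (γ - j) * Real.Gamma (1 - γ + j)) := by ring
      _ = _ := by rw [hrefl, mul_div_assoc']; exact mul_div_cancel_left₀ _ hsin.ne'
  have hr : (2 / (2:ℝ)^(2*γ) * Real.Gamma (1 - γ + s + (j:ℝ)) /
        (Real.Gamma (γ - (j:ℝ)) * Real.Gamma (1 + s + (j:ℝ))) * (-1)^j / (j.factorial : ℝ))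
      = (2 * Real.sin (Real.pi * γ) / ((2:ℝ) ^ (2*γ) * Real.pi)) *
        (Real.Gamma (1 - γ + s + j) * Real.Gamma (1 - γ + j) /
          (Real.Gamma (1 + s + j) * j.factorial)) := by
    rw [hΓγ]
    rcases Nat.even_or_odd j with h | h <;> rw [h.neg_one_pow] <;> field_simp <;> ring
  rw [res13, norm_mul, Complex.norm_real, Real.norm_eq_abs]
  have : ‖-Complex.I‖ = 1 := by simp
  rw [this, mul_one, hr, abs_of_nonneg]
  apply mul_nonneg (div_nonneg (by nlinarith) (by positivity))
  positivity

lemma aux13_abs_tendsto (γ s : ℝ) (hγ0 : 0 < γ) (hγ1 : γ < 1) (hs0 : 0 ≤ s) :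
    Tendsto (fun j : ℕ => ‖res13 γ s j‖ / (j:ℝ) ^ (-(2*γ))) atTop
      (nhds (2 * Real.sin (Real.pi * γ) / ((2:ℝ) ^ (2*γ) * Real.pi))) := by
  set K := 2 * Real.sin (Real.pi * γ) / ((2:ℝ) ^ (2*γ) * Real.pi) with hK
  have t1 := aux13_ratio_tendsto (x := s - γ) (by linarith)
  have t2 := aux13_ratio_tendsto (x := -γ) (by linarith)
  have t3 := aux13_ratio_tendsto (x := s) (by linarith)
  have T := (((tendsto_const_nhds (x := K) (f := atTop (α := ℕ))).mul t1).mul t2).div t3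
    one_ne_zero
  simp only [mul_one, div_one] at T
  refine Tendsto.congr' ?_ T
  rw [Filter.EventuallyEq, eventually_atTop]
  refine ⟨1, fun j hj => ?_⟩
  simp only [Pi.div_apply]
  have ha : (0:ℝ) < (j:ℝ) := by exact_mod_cast hj
  have hfac : (0:ℝ) < (j.factorial : ℝ) := by exact_mod_cast j.factorial_pos
  have hΓ3 : 0 < Real.Gamma (s + (j:ℝ) + 1) := Real.Gamma_pos_of_pos (by positivity)
  have hu : (0:ℝ) < (j:ℝ) ^ s := Real.rpow_pos_of_pos ha _
  have hv : (0:ℝ) < (j:ℝ) ^ (-γ) := Real.rpow_pos_of_pos ha _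
  have e1 : (j:ℝ) ^ (s - γ) = (j:ℝ) ^ s * (j:ℝ) ^ (-γ) := by
    rw [← Real.rpow_add ha]; ring_nf
  have e2 : (j:ℝ) ^ (-(2*γ)) = (j:ℝ) ^ (-γ) * (j:ℝ) ^ (-γ) := by
    rw [← Real.rpow_add ha]; ring_nf
  have g1 : Real.Gamma (s - γ + (j:ℝ) + 1) = Real.Gamma (1 - γ + s + j) := by
    congr 1; ring
  have g2 : Real.Gamma (-γ + (j:ℝ) + 1) = Real.Gamma (1 - γ + j) := by
    congr 1; ring
  have g3 : Real.Gamma (s + (j:ℝ) + 1) = Real.Gamma (1 + s + j) := by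
    congr 1; ring
  rw [aux13_res_formula γ s hγ0 hγ1 hs0 j, ← hK, e1, e2, g1, g2]
  rw [g3] at hΓ3
  field_simp
  ring

/-- The residue of the reciprocal symbol at the `j`-th pole `i σ_j` equals
`c_j = (2/2^{2γ}) Γ(1-γ+s+j)/(Γ(γ-j)Γ(1+s+j)) · (-i)(-1)^j/j!`; moreover
`|c_j| ≍ j^{-2γ}` as `j → ∞`, and the series `Σ_j c_j e^{-σ_j t}` converges
absolutely for every `t > 0`. -/
theorem stmt13 (n : ℕ) (hn : 2 ≤ n) (γ μ s : ℝ) (hγ0 : 0 < γ) (hγ1 : γ < 1)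
    (hμ : 0 ≤ μ) (hs : s = Real.sqrt (((n : ℝ) / 2 - 1) ^ 2 + μ)) :
    (∀ j : ℕ,
        Tendsto (fun z : ℂ => (z - Complex.I * ((sigma13 γ s j : ℝ) : ℂ)) * (Theta13 γ s z)⁻¹)
          (nhdsWithin (Complex.I * ((sigma13 γ s j : ℝ) : ℂ))
            {Complex.I * ((sigma13 γ s j : ℝ) : ℂ)}ᶜ)
          (nhds (res13 γ s j))) ∧
      (∃ C₁ C₂ : ℝ, 0 < C₁ ∧ 0 < C₂ ∧
        ∀ᶠ j : ℕ in atTop,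
          C₁ * (j : ℝ) ^ (-(2 * γ)) ≤ ‖res13 γ s j‖ ∧
            ‖res13 γ s j‖ ≤ C₂ * (j : ℝ) ^ (-(2 * γ))) ∧
      ∀ t : ℝ, 0 < t →
        Summable (fun j : ℕ => ‖res13 γ s j‖ * Real.exp (-(sigma13 γ s j) * t)) := by
  have hs0 : 0 ≤ s := hs ▸ Real.sqrt_nonneg _
  have hπ := Real.pi_pos
  have hsin : 0 < Real.sin (Real.pi * γ) :=
    Real.sin_pos_of_pos_of_lt_pi (by positivity) (by nlinarith)
  set K := 2 * Real.sin (Real.pi * γ) / ((2:ℝ) ^ (2*γ) * Real.pi) with hK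
  have hKpos : 0 < K := div_pos (by nlinarith) (by positivity)
  have hT := aux13_abs_tendsto γ s hγ0 hγ1 hs0
  rw [← hK] at hT
  have hbound : ∀ᶠ j : ℕ in atTop,
      K/2 * (j:ℝ) ^ (-(2*γ)) ≤ ‖res13 γ s j‖ ∧
        ‖res13 γ s j‖ ≤ 2*K * (j:ℝ) ^ (-(2*γ)) := by
    have hlow := hT.eventually_const_lt (show K/2 < K by linarith)
    have hhigh := hT.eventually_lt_const (show K < 2*K by linarith)
    filter_upwards [hlow, hhigh, eventually_ge_atTop 1] with j h1 h2 hj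
    have hp : (0:ℝ) < (j:ℝ) ^ (-(2*γ)) :=
      Real.rpow_pos_of_pos (by exact_mod_cast hj) _
    constructor
    · exact ((lt_div_iff₀ hp).mp h1).le
    · exact ((div_lt_iff₀ hp).mp h2).le
  refine ⟨?_, ⟨K/2, 2*K, by linarith, by linarith, hbound⟩, ?_⟩
  · intro j
    set σ : ℝ := sigma13 γ s j with hσ
    set z₀ : ℂ := Complex.I * (σ : ℂ) with hz₀
    set Bc : ℂ := ((1/2 - γ/2 + s/2 : ℝ) : ℂ) with hBc
    set Ac : ℂ := ((1/2 + γ/2 + s/2 : ℝ) : ℂ) with hAc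
    have hσc : (σ : ℂ) = 2 * (Bc + j) := by rw [hσ, sigma13, hBc]; push_cast; ring
    have hz0val : Bc + z₀/2 * Complex.I = -(j : ℂ) := by
      rw [hz₀, hσc]
      linear_combination (Bc + (j:ℂ)) * Complex.I_mul_I
    have hv1 : Bc - z₀/2 * Complex.I = (((1 - γ + s + j : ℝ)) : ℂ) := by
      rw [hz₀, hσc, hBc]
      push_cast
      linear_combination (-(1/2 - (γ:ℂ)/2 + (s:ℂ)/2 + (j:ℂ))) * Complex.I_mul_I
    have hv2 : Ac + z₀/2 * Complex.I = (((γ - j : ℝ)) : ℂ) := by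
      rw [hz₀, hσc, hBc, hAc]
      push_cast
      linear_combination ((1/2 - (γ:ℂ)/2 + (s:ℂ)/2 + (j:ℂ))) * Complex.I_mul_I
    have hv3 : Ac - z₀/2 * Complex.I = (((1 + s + j : ℝ)) : ℂ) := by
      rw [hz₀, hσc, hBc, hAc]
      push_cast
      linear_combination (-(1/2 - (γ:ℂ)/2 + (s:ℂ)/2 + (j:ℂ))) * Complex.I_mul_I
    -- the affine map into the punctured neighborhood of `-j`
    have hζ : Tendsto (fun z : ℂ => Bc + z/2 * Complex.I)
        (nhdsWithin z₀ {z₀}ᶜ) (nhdsWithin (-(j:ℂ)) {(-(j:ℂ))}ᶜ) := by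
      rw [tendsto_nhdsWithin_iff]
      constructor
      · have hc : Continuous fun z : ℂ => Bc + z/2 * Complex.I := by fun_prop
        have h0 := hc.continuousAt (x := z₀)
        rw [ContinuousAt, hz0val] at h0
        exact h0.mono_left nhdsWithin_le_nhds
      · filter_upwards [self_mem_nhdsWithin] with z hz
        simp only [Set.mem_compl_iff, Set.mem_singleton_iff] at hz ⊢
        intro h
        apply hz
        linear_combination (-2*Complex.I) * h + (2*Complex.I) * hz0val +
          (z - z₀) * Complex.I_mul_I
    have hres := (aux13_gammaRes j).comp hζ
    -- nonvanishing facts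
    have hj0 : (0:ℝ) ≤ (j:ℝ) := Nat.cast_nonneg j
    have hne1 : ∀ m : ℕ, (((1 - γ + s + j : ℝ)) : ℂ) ≠ -(m:ℂ) := by
      intro m h
      have : (1 - γ + s + j : ℝ) = -(m : ℝ) := by exact_mod_cast h
      have hm : (0:ℝ) ≤ (m:ℝ) := Nat.cast_nonneg m
      linarith
    have hne3 : ∀ m : ℕ, (((1 + s + j : ℝ)) : ℂ) ≠ -(m:ℂ) := by
      intro m h
      have : (1 + s + j : ℝ) = -(m : ℝ) := by exact_mod_cast h
      have hm : (0:ℝ) ≤ (m:ℝ) := Nat.cast_nonneg m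
      linarith
    have hne2 : ∀ m : ℕ, (((γ - j : ℝ)) : ℂ) ≠ -(m:ℂ) := by
      intro m h
      have h' : γ - (j:ℝ) = -(m : ℝ) := by exact_mod_cast h
      have : γ = ((j:ℤ) - (m:ℤ) : ℤ) := by push_cast; linarith
      have h0 : (0:ℝ) < (((j:ℤ) - (m:ℤ) : ℤ) : ℝ) := by rw [← this]; exact hγ0
      have h1 : (((j:ℤ) - (m:ℤ) : ℤ) : ℝ) < 1 := by rw [← this]; exact hγ1
      have h0' : (0:ℤ) < (j:ℤ) - (m:ℤ) := by exact_mod_cast h0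
      have h1' : (j:ℤ) - (m:ℤ) < 1 := by exact_mod_cast h1
      omega
    have hΓ2ne : Complex.Gamma (((γ - j : ℝ)) : ℂ) ≠ 0 := Complex.Gamma_ne_zero hne2
    have hΓ3ne : Complex.Gamma (((1 + s + j : ℝ)) : ℂ) ≠ 0 := Complex.Gamma_ne_zero hne3
    have hcne : ((((2:ℝ) ^ (2*γ) : ℝ)) : ℂ) ≠ 0 := by
      exact_mod_cast (Real.rpow_pos_of_pos two_pos (2*γ)).ne'
    -- continuity of the regular factor
    have hg1 : ContinuousAt Complex.Gamma (Bc - z₀/2 * Complex.I) := by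
      rw [hv1]
      exact (Complex.differentiableAt_Gamma _ hne1).continuousAt
    have hg2 : ContinuousAt Complex.Gamma (Ac + z₀/2 * Complex.I) := by
      rw [hv2]
      exact (Complex.differentiableAt_Gamma _ hne2).continuousAt
    have hg3 : ContinuousAt Complex.Gamma (Ac - z₀/2 * Complex.I) := by
      rw [hv3]
      exact (Complex.differentiableAt_Gamma _ hne3).continuousAt
    have c1 : ContinuousAt (fun z : ℂ => Complex.Gamma (Bc - z/2 * Complex.I)) z₀ :=
      ContinuousAt.comp (x := z₀) (f := fun z : ℂ => Bc - z/2 * Complex.I) hg1 (by fun_prop)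
    have c2 : ContinuousAt (fun z : ℂ => Complex.Gamma (Ac + z/2 * Complex.I)) z₀ :=
      ContinuousAt.comp (x := z₀) (f := fun z : ℂ => Ac + z/2 * Complex.I) hg2 (by fun_prop)
    have c3 : ContinuousAt (fun z : ℂ => Complex.Gamma (Ac - z/2 * Complex.I)) z₀ :=
      ContinuousAt.comp (x := z₀) (f := fun z : ℂ => Ac - z/2 * Complex.I) hg3 (by fun_prop)
    have cdiv : ContinuousAt (fun z : ℂ => Complex.Gamma (Bc - z/2 * Complex.I) /
        (((((2:ℝ) ^ (2*γ) : ℝ)) : ℂ) * Complex.Gamma (Ac + z/2 * Complex.I) *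
          Complex.Gamma (Ac - z/2 * Complex.I))) z₀ := by
      apply c1.div ((continuousAt_const.mul c2).mul c3)
      show ((((2:ℝ) ^ (2*γ) : ℝ)) : ℂ) * Complex.Gamma (Ac + z₀/2 * Complex.I) *
        Complex.Gamma (Ac - z₀/2 * Complex.I) ≠ 0
      rw [hv2, hv3]
      exact mul_ne_zero (mul_ne_zero hcne hΓ2ne) hΓ3ne
    have h2 : Tendsto (fun z : ℂ => Complex.Gamma (Bc - z/2 * Complex.I) /
        (((((2:ℝ) ^ (2*γ) : ℝ)) : ℂ) * Complex.Gamma (Ac + z/2 * Complex.I) *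
          Complex.Gamma (Ac - z/2 * Complex.I))) (nhdsWithin z₀ {z₀}ᶜ)
        (nhds (Complex.Gamma (((1 - γ + s + j : ℝ)) : ℂ) /
          (((((2:ℝ) ^ (2*γ) : ℝ)) : ℂ) * Complex.Gamma (((γ - j : ℝ)) : ℂ) *
            Complex.Gamma (((1 + s + j : ℝ)) : ℂ)))) := by
      have := cdiv.continuousWithinAt (s := {z₀}ᶜ)
      rw [ContinuousWithinAt] at this
      simp only [hv1, hv2, hv3] at this
      exact this
    -- combine
    have hmul := (tendsto_const_nhds (x := (-2) * Complex.I)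
      (f := nhdsWithin z₀ {z₀}ᶜ)).mul (hres.mul h2)
    have hval : ((-2) * Complex.I) * (((-1)^j / (j.factorial : ℂ)) *
        (Complex.Gamma (((1 - γ + s + j : ℝ)) : ℂ) /
          (((((2:ℝ) ^ (2*γ) : ℝ)) : ℂ) * Complex.Gamma (((γ - j : ℝ)) : ℂ) *
            Complex.Gamma (((1 + s + j : ℝ)) : ℂ)))) = res13 γ s j := by
      rw [res13, Complex.Gamma_ofReal, Complex.Gamma_ofReal, Complex.Gamma_ofReal]
      have hΓ2ne' : Real.Gamma (γ - j) ≠ 0 := by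
        intro h
        exact hΓ2ne (by rw [Complex.Gamma_ofReal, h, Complex.ofReal_zero])
      have hΓ3ne' : Real.Gamma (1 + s + j) ≠ 0 :=
        (Real.Gamma_pos_of_pos (by linarith)).ne'
      have hfne : ((j.factorial : ℝ)) ≠ 0 := Nat.cast_ne_zero.mpr j.factorial_ne_zero
      have hcne' : ((2:ℝ) ^ (2*γ)) ≠ 0 := (Real.rpow_pos_of_pos two_pos (2*γ)).ne'
      push_cast
      field_simp
    rw [hval] at hmul
    refine hmul.congr fun z => ?_
    simp only [Function.comp_apply]
    rw [Theta13, inv_div, ← hBc, ← hAc]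
    have hzz : z - z₀ = (-2) * Complex.I * ((Bc + z/2 * Complex.I) + j) := by
      rw [hz₀, hσc]
      linear_combination z * Complex.I_mul_I
    rw [hzz]
    ring

  · intro t ht
    set r := Real.exp (-2*t) with hr
    have hr0 : 0 ≤ r := Real.exp_nonneg _
    have hr1 : r < 1 := Real.exp_lt_one_iff.mpr (by linarith)
    set B : ℝ := 1/2 - γ/2 + s/2 with hB
    set M : ℝ := 2*K * Real.exp (-(2*B)*t) with hM
    have hub : ∀ᶠ j : ℕ in atTop,
        ‖res13 γ s j‖ * Real.exp (-(sigma13 γ s j) * t) ≤ M * r ^ j := by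
      filter_upwards [hbound, eventually_ge_atTop 1] with j hbd hj
      have hj1 : (1:ℝ) ≤ (j:ℝ) := by exact_mod_cast hj
      have hp1 : (j:ℝ) ^ (-(2*γ)) ≤ 1 :=
        Real.rpow_le_one_of_one_le_of_nonpos hj1 (by linarith)
      have habsle : ‖res13 γ s j‖ ≤ 2*K := by
        calc ‖res13 γ s j‖ ≤ 2*K * (j:ℝ) ^ (-(2*γ)) := hbd.2
          _ ≤ 2*K * 1 := by nlinarith
          _ = 2*K := mul_one _
      have hexp : Real.exp (-(sigma13 γ s j) * t) = Real.exp (-(2*B)*t) * r ^ j := by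
        rw [hr, ← Real.exp_nat_mul, ← Real.exp_add]
        congr 1
        rw [sigma13, hB]
        ring
      rw [hexp, hM, ← mul_assoc]
      rw [mul_assoc (‖res13 γ s j‖)]
      calc ‖res13 γ s j‖ * (Real.exp (-(2*B)*t) * r ^ j)
          ≤ 2*K * (Real.exp (-(2*B)*t) * r ^ j) := by
            apply mul_le_mul_of_nonneg_right habsle
            positivity
        _ = 2*K * Real.exp (-(2*B)*t) * r ^ j := by ring
    obtain ⟨N, hN⟩ := eventually_atTop.mp hub
    rw [← summable_nat_add_iff N]
    refine Summable.of_nonneg_of_le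
      (fun j => mul_nonneg (norm_nonneg _) (Real.exp_nonneg _))
      (fun j => ?_)
      (((summable_geometric_of_lt_one hr0 hr1).mul_left (M * r ^ N)))
    calc ‖res13 γ s (j + N)‖ * Real.exp (-(sigma13 γ s (j + N)) * t)
        ≤ M * r ^ (j + N) := hN (j + N) (Nat.le_add_left N j)
      _ = M * r ^ N * r ^ j := by rw [pow_add]; ring
end

section
/- Let f₁, f₂ : ℝ → ℝ with f₁(t) = O(e^{-a|t|}) as |t| → ∞, f₂(t) = O(e^{-a₊ t}) as t → +∞ and f₂(t) = O(e^{a₋ t}) as t → -∞, where a, a₊ > 0 and a₋ > -a, and with a ≠ a₊. Then the convolution f₁ * f₂(t) = ∫_ℝ f₁(t-s) f₂(s) ds satisfies f₁ * f₂(t) = O(e^{-min(a, a₊) t}) as t → +∞. -/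
open MeasureTheory

open Set Real


lemma expIntIoi {c : ℝ} (hc : 0 < c) (t : ℝ) :
    ∫ s in Set.Ioi t, Real.exp (-c * s) = Real.exp (-c * t) / c := by
  have h := integral_comp_mul_left_Ioi (fun x => Real.exp (-x)) t hc
  simp only [smul_eq_mul, integral_exp_neg_Ioi] at h
  simp only [neg_mul] at h ⊢
  rw [h]; ring

lemma expIntegrableIoi {c : ℝ} (hc : 0 < c) (t : ℝ) :
    MeasureTheory.IntegrableOn (fun s : ℝ => Real.exp (-c * s)) (Set.Ioi t) :=
  exp_neg_integrableOn_Ioi t hc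

lemma expIntIic {c : ℝ} (hc : 0 < c) :
    ∫ s in Set.Iic (0:ℝ), Real.exp (c * s) = 1 / c := by
  have h := integral_comp_neg_Iic (0:ℝ) (fun x => Real.exp (-c * x))
  simp only [mul_neg, neg_mul, neg_neg, neg_zero] at h
  rw [h]
  simpa [neg_mul] using expIntIoi hc 0

lemma expIntegrableIic {c : ℝ} (hc : 0 < c) :
    MeasureTheory.IntegrableOn (fun s : ℝ => Real.exp (c * s)) (Set.Iic 0) := by
  rw [← (Measure.measurePreserving_neg (volume : Measure ℝ)).integrableOn_comp_preimage
      (Homeomorph.neg ℝ).measurableEmbedding]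
  simp only [Function.comp_def, mul_neg, neg_preimage, neg_Iic, neg_zero]
  rw [integrableOn_Ici_iff_integrableOn_Ioi]
  simpa [neg_mul] using exp_neg_integrableOn_Ioi (0:ℝ) hc

lemma intExpMul {c : ℝ} (hc : c ≠ 0) (t : ℝ) :
    ∫ x in (0:ℝ)..t, Real.exp (c * x) = (Real.exp (c * t) - 1) / c := by
  have hd : ∀ x ∈ Set.uIcc (0:ℝ) t,
      HasDerivAt (fun x => Real.exp (c * x) / c) (Real.exp (c * x)) x := by
    intro x _
    have h1 : HasDerivAt (fun x : ℝ => c * x) c x := by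
      simpa using (hasDerivAt_id x).const_mul c
    have := (h1.exp).div_const c
    simpa [mul_div_assoc, mul_div_cancel_right₀, hc] using this
  rw [intervalIntegral.integral_eq_sub_of_hasDerivAt hd
    ((Real.continuous_exp.comp (continuous_const.mul continuous_id)).intervalIntegrable _ _)]
  simp [sub_div]


lemma globalBound₂ (f : ℝ → ℝ) (b : ℝ)
    (hloc : ∀ r : ℝ, 0 < r → ∃ M : ℝ, ∀ t : ℝ, |t| ≤ r → |f t| ≤ M)
    (h : ∃ T C : ℝ, 0 < C ∧ ∀ t : ℝ, T ≤ t → |f t| ≤ C * Real.exp (-b * t)) :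
    ∃ D : ℝ, 0 < D ∧ ∀ t : ℝ, 0 ≤ t → |f t| ≤ D * Real.exp (-b * t) := by
  obtain ⟨T, C, hC, hb⟩ := h
  obtain ⟨M, hM⟩ := hloc (|T| + 1) (by positivity)
  refine ⟨max C ((|M| + 1) * Real.exp (|b| * (|T| + 1))), lt_max_iff.mpr (Or.inl hC), ?_⟩
  intro t ht
  by_cases h' : T ≤ t
  · exact (hb t h').trans (by gcongr; exact le_max_left _ _)
  · push_neg at h'
    have h1 : |t| ≤ |T| + 1 := by
      rw [abs_of_nonneg ht]; have := le_abs_self T; linarith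
    have h3 : (1:ℝ) ≤ Real.exp (|b| * (|T| + 1)) * Real.exp (-b * t) := by
      rw [← Real.exp_add]
      apply Real.one_le_exp
      have hbt : b * t ≤ |b| * (|T| + 1) := by
        calc b * t ≤ |b * t| := le_abs_self _
          _ = |b| * |t| := abs_mul _ _
          _ ≤ |b| * (|T| + 1) := by gcongr
      linarith
    calc |f t| ≤ M := hM t h1
      _ ≤ |M| + 1 := by have := le_abs_self M; linarith
      _ = (|M| + 1) * 1 := (mul_one _).symm
      _ ≤ (|M| + 1) * (Real.exp (|b| * (|T| + 1)) * Real.exp (-b * t)) := by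
          apply mul_le_mul_of_nonneg_left h3 (by positivity)
      _ = ((|M| + 1) * Real.exp (|b| * (|T| + 1))) * Real.exp (-b * t) := by ring
      _ ≤ _ := by gcongr; exact le_max_right _ _

lemma globalBound₁ (f : ℝ → ℝ) (a : ℝ) (ha : 0 < a)
    (hloc : ∀ r : ℝ, 0 < r → ∃ M : ℝ, ∀ t : ℝ, |t| ≤ r → |f t| ≤ M)
    (h : ∃ T C : ℝ, 0 < C ∧ ∀ t : ℝ, T ≤ |t| → |f t| ≤ C * Real.exp (-a * |t|)) :
    ∃ D : ℝ, 0 < D ∧ ∀ t : ℝ, |f t| ≤ D * Real.exp (-a * |t|) := by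
  obtain ⟨T, C, hC, hb⟩ := h
  obtain ⟨M, hM⟩ := hloc (|T| + 1) (by positivity)
  refine ⟨max C ((|M| + 1) * Real.exp (a * (|T| + 1))), lt_max_iff.mpr (Or.inl hC), ?_⟩
  intro t
  by_cases h' : T ≤ |t|
  · exact (hb t h').trans (by gcongr; exact le_max_left _ _)
  · push_neg at h'
    have h1 : |t| ≤ |T| + 1 := by have := le_abs_self T; linarith
    have h3 : (1:ℝ) ≤ Real.exp (a * (|T| + 1)) * Real.exp (-a * |t|) := by
      rw [← Real.exp_add]
      apply Real.one_le_exp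
      have hbt : a * |t| ≤ a * (|T| + 1) := by gcongr
      linarith
    calc |f t| ≤ M := hM t h1
      _ ≤ |M| + 1 := by have := le_abs_self M; linarith
      _ = (|M| + 1) * 1 := (mul_one _).symm
      _ ≤ (|M| + 1) * (Real.exp (a * (|T| + 1)) * Real.exp (-a * |t|)) := by
          apply mul_le_mul_of_nonneg_left h3 (by positivity)
      _ = ((|M| + 1) * Real.exp (a * (|T| + 1))) * Real.exp (-a * |t|) := by ring
      _ ≤ _ := by gcongr; exact le_max_right _ _

lemma midBound {a aP t : ℝ} (ha : 0 < a) (haP : 0 < aP) (hne : a ≠ aP) (ht : 0 ≤ t) :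
    Real.exp (-a * t) * ((Real.exp ((a - aP) * t) - 1) / (a - aP)) ≤
    Real.exp (-(min a aP) * t) / |a - aP| := by
  rcases lt_or_gt_of_ne hne with h | h
  · have h1 : |a - aP| = aP - a := by rw [abs_of_neg (by linarith)]; ring
    have h2 : min a aP = a := min_eq_left h.le
    rw [h1, h2]
    have h3 : (Real.exp ((a - aP) * t) - 1) / (a - aP)
        = (1 - Real.exp ((a - aP) * t)) / (aP - a) := by
      have hne' : a - aP ≠ 0 := by intro hh; apply hne; linarith
      rw [div_eq_div_iff hne' (by linarith : aP - a ≠ 0)]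
      ring
    rw [h3, ← mul_div_assoc, div_le_div_iff₀ (by linarith) (by linarith)]
    nlinarith [Real.exp_pos ((a - aP) * t), Real.exp_pos (-a * t),
      mul_pos (mul_pos (Real.exp_pos (-a * t)) (Real.exp_pos ((a - aP) * t)))
        (show (0:ℝ) < aP - a by linarith)]
  · have h1 : |a - aP| = a - aP := abs_of_pos (by linarith)
    have h2 : min a aP = aP := min_eq_right h.le
    rw [h1, h2]
    have hX : Real.exp (-a * t) * (Real.exp ((a - aP) * t) - 1)
        = Real.exp (-aP * t) - Real.exp (-a * t) := by
      rw [mul_sub, ← Real.exp_add, mul_one, show -a * t + (a - aP) * t = -aP * t by ring]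
    rw [← mul_div_assoc, hX, div_le_div_iff₀ (by linarith) (by linarith)]
    nlinarith [Real.exp_pos (-a * t), Real.exp_pos (-aP * t)]



/-- Convolution of exponentially decaying functions: if `f₁(t) = O(e^{-a|t|})`
as `|t| → ∞`, `f₂(t) = O(e^{-a₊ t})` as `t → +∞`, `f₂(t) = O(e^{a₋ t})` as
`t → -∞`, with `a, a₊ > 0`, `a₋ > -a`, `a ≠ a₊`, and both functions are
measurable and bounded on compacts, then
`f₁ * f₂(t) = O(e^{-min(a,a₊) t})` as `t → +∞`. -/
theorem stmt14 (f₁ f₂ : ℝ → ℝ) (a aP aM : ℝ)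
    (ha : 0 < a) (haP : 0 < aP) (haM : -a < aM) (hne : a ≠ aP)
    (hm₁ : Measurable f₁) (hm₂ : Measurable f₂)
    (hloc₁ : ∀ r : ℝ, 0 < r → ∃ M : ℝ, ∀ t : ℝ, |t| ≤ r → |f₁ t| ≤ M)
    (hloc₂ : ∀ r : ℝ, 0 < r → ∃ M : ℝ, ∀ t : ℝ, |t| ≤ r → |f₂ t| ≤ M)
    (h₁ : ∃ T C : ℝ, 0 < C ∧ ∀ t : ℝ, T ≤ |t| → |f₁ t| ≤ C * Real.exp (-a * |t|))
    (h₂P : ∃ T C : ℝ, 0 < C ∧ ∀ t : ℝ, T ≤ t → |f₂ t| ≤ C * Real.exp (-aP * t))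
    (h₂M : ∃ T C : ℝ, 0 < C ∧ ∀ t : ℝ, t ≤ -T → |f₂ t| ≤ C * Real.exp (aM * t)) :
    ∃ T C : ℝ, 0 < C ∧ ∀ t : ℝ, T ≤ t →
      |∫ s : ℝ, f₁ (t - s) * f₂ s| ≤ C * Real.exp (-(min a aP) * t) := by
  -- global bounds
  obtain ⟨D₁, hD₁, hg₁⟩ := globalBound₁ f₁ a ha hloc₁ h₁
  obtain ⟨D₂, hD₂, hg₂P⟩ := globalBound₂ f₂ aP hloc₂ h₂P
  obtain ⟨D₃, hD₃, hg₂M'⟩ := globalBound₂ (fun s => f₂ (-s)) aM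
    (fun r hr => by obtain ⟨M, hM⟩ := hloc₂ r hr; exact ⟨M, fun t htr => hM (-t) (by rwa [abs_neg])⟩)
    (by obtain ⟨T, C, hC, hb⟩ := h₂M
        refine ⟨T, C, hC, fun t htT => ?_⟩
        have := hb (-t) (by linarith)
        rwa [show aM * -t = -aM * t by ring] at this)
  have hg₂M : ∀ s : ℝ, s ≤ 0 → |f₂ s| ≤ D₃ * Real.exp (aM * s) := by
    intro s hs
    have := hg₂M' (-s) (by linarith)
    rwa [neg_neg, show -aM * -s = aM * s by ring] at this
  set D₂' := max D₂ D₃ with hD₂'def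
  have hg₂P' : ∀ s : ℝ, 0 ≤ s → |f₂ s| ≤ D₂' * Real.exp (-aP * s) := fun s hs =>
    (hg₂P s hs).trans (by gcongr; exact le_max_left _ _)
  have hg₂M'' : ∀ s : ℝ, s ≤ 0 → |f₂ s| ≤ D₂' * Real.exp (aM * s) := fun s hs =>
    (hg₂M s hs).trans (by gcongr; exact le_max_right _ _)
  clear hg₂P hg₂M hg₂M'
  set m := min a aP with hmdef
  have hm_pos : 0 < m := lt_min ha haP
  have hm_a : m ≤ a := min_le_left _ _
  have hm_aP : m ≤ aP := min_le_right _ _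
  have haaM : 0 < a + aM := by linarith
  have haaP : 0 < a + aP := by linarith
  have habs_ne : (0:ℝ) < |a - aP| := abs_pos.mpr (sub_ne_zero.mpr hne)
  set D := D₁ * D₂' with hDdef
  have hDpos : 0 < D := mul_pos hD₁ (lt_max_iff.mpr (Or.inl hD₂))
  refine ⟨0, D * (1 / (a + aM) + 1 / |a - aP| + 1 / (a + aP)), by positivity, ?_⟩
  intro t ht
  set g : ℝ → ℝ := fun s => |f₁ (t - s) * f₂ s| with hgdef
  have hgmeas : Measurable g := ((hm₁.comp (measurable_const.sub measurable_id)).mul hm₂).abs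
  have hgnn : ∀ s, 0 ≤ g s := fun s => abs_nonneg _
  have hexpmul : ∀ x y : ℝ, Real.exp x * Real.exp y = Real.exp (x + y) :=
    fun x y => (Real.exp_add x y).symm
  -- pointwise bounds
  have hbd1 : ∀ s ∈ Iic (0:ℝ), g s ≤ D * Real.exp (-a * t) * Real.exp ((a + aM) * s) := by
    intro s hs
    simp only [mem_Iic] at hs
    have h1 := hg₁ (t - s)
    have h2 := hg₂M'' s hs
    have habs : |t - s| = t - s := abs_of_nonneg (by linarith)
    rw [habs] at h1
    calc g s = |f₁ (t - s)| * |f₂ s| := abs_mul _ _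
      _ ≤ (D₁ * Real.exp (-a * (t - s))) * (D₂' * Real.exp (aM * s)) :=
          mul_le_mul h1 h2 (abs_nonneg _) (by positivity)
      _ = D * Real.exp (-a * t) * Real.exp ((a + aM) * s) := by
          have he : Real.exp (-a * (t - s)) * Real.exp (aM * s)
              = Real.exp (-a * t) * Real.exp ((a + aM) * s) := by
            rw [hexpmul, hexpmul]; congr 1; ring
          linear_combination (D₁ * D₂') * he
  have hbd2 : ∀ s ∈ Ioc (0:ℝ) t, g s ≤ D * Real.exp (-a * t) * Real.exp ((a - aP) * s) := by
    intro s hs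
    obtain ⟨hs0, hst⟩ := hs
    have h1 := hg₁ (t - s)
    have h2 := hg₂P' s hs0.le
    have habs : |t - s| = t - s := abs_of_nonneg (by linarith)
    rw [habs] at h1
    calc g s = |f₁ (t - s)| * |f₂ s| := abs_mul _ _
      _ ≤ (D₁ * Real.exp (-a * (t - s))) * (D₂' * Real.exp (-aP * s)) :=
          mul_le_mul h1 h2 (abs_nonneg _) (by positivity)
      _ = D * Real.exp (-a * t) * Real.exp ((a - aP) * s) := by
          have he : Real.exp (-a * (t - s)) * Real.exp (-aP * s)
              = Real.exp (-a * t) * Real.exp ((a - aP) * s) := by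
            rw [hexpmul, hexpmul]; congr 1; ring
          linear_combination (D₁ * D₂') * he
  have hbd3 : ∀ s ∈ Ioi t, g s ≤ D * Real.exp (a * t) * Real.exp (-(a + aP) * s) := by
    intro s hs
    simp only [mem_Ioi] at hs
    have h1 := hg₁ (t - s)
    have h2 := hg₂P' s (by linarith)
    have habs : |t - s| = s - t := by rw [abs_of_nonpos (by linarith)]; ring
    rw [habs] at h1
    calc g s = |f₁ (t - s)| * |f₂ s| := abs_mul _ _
      _ ≤ (D₁ * Real.exp (-a * (s - t))) * (D₂' * Real.exp (-aP * s)) :=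
          mul_le_mul h1 h2 (abs_nonneg _) (by positivity)
      _ = D * Real.exp (a * t) * Real.exp (-(a + aP) * s) := by
          have he : Real.exp (-a * (s - t)) * Real.exp (-aP * s)
              = Real.exp (a * t) * Real.exp (-(a + aP) * s) := by
            rw [hexpmul, hexpmul]; congr 1; ring
          linear_combination (D₁ * D₂') * he
  -- integrability of the dominators
  have hdom1 : IntegrableOn (fun s => D * Real.exp (-a * t) * Real.exp ((a + aM) * s))
      (Iic (0:ℝ)) := (expIntegrableIic haaM).const_mul _
  have hdom2 : IntegrableOn (fun s => D * Real.exp (-a * t) * Real.exp ((a - aP) * s))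
      (Ioc (0:ℝ) t) := by
    apply Continuous.integrableOn_Ioc
    exact continuous_const.mul (Real.continuous_exp.comp (continuous_const.mul continuous_id))
  have hdom3 : IntegrableOn (fun s => D * Real.exp (a * t) * Real.exp (-(a + aP) * s))
      (Ioi t) := (expIntegrableIoi haaP t).const_mul _
  -- integrability of g on each piece
  have hI1 : IntegrableOn g (Iic (0:ℝ)) := by
    apply hdom1.mono' (hgmeas.aestronglyMeasurable.restrict)
    filter_upwards [ae_restrict_mem measurableSet_Iic] with s hs
    rw [Real.norm_eq_abs, abs_abs]
    exact hbd1 s hs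
  have hI2 : IntegrableOn g (Ioc (0:ℝ) t) := by
    apply hdom2.mono' (hgmeas.aestronglyMeasurable.restrict)
    filter_upwards [ae_restrict_mem measurableSet_Ioc] with s hs
    rw [Real.norm_eq_abs, abs_abs]
    exact hbd2 s hs
  have hI3 : IntegrableOn g (Ioi t) := by
    apply hdom3.mono' (hgmeas.aestronglyMeasurable.restrict)
    filter_upwards [ae_restrict_mem measurableSet_Ioi] with s hs
    rw [Real.norm_eq_abs, abs_abs]
    exact hbd3 s hs
  have hsets : (univ : Set ℝ) = Iic 0 ∪ (Ioc 0 t ∪ Ioi t) := by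
    rw [Ioc_union_Ioi_eq_Ioi ht, Iic_union_Ioi]
  have hdisj1 : Disjoint (Iic (0:ℝ)) (Ioc 0 t ∪ Ioi t) := by
    apply (Iic_disjoint_Ioi (le_refl (0:ℝ))).mono_right
    exact union_subset Ioc_subset_Ioi_self (Ioi_subset_Ioi ht)
  have hdisj2 : Disjoint (Ioc (0:ℝ) t) (Ioi t) := Ioc_disjoint_Ioi le_rfl
  have hsplit : ∫ s, g s = (∫ s in Iic (0:ℝ), g s) + ((∫ s in Ioc (0:ℝ) t, g s)
      + (∫ s in Ioi t, g s)) := by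
    rw [← MeasureTheory.setIntegral_univ, hsets,
      setIntegral_union hdisj1 (measurableSet_Ioc.union measurableSet_Ioi) hI1 (hI2.union hI3),
      setIntegral_union hdisj2 measurableSet_Ioi hI2 hI3]
  -- bounds on each piece
  have hB1 : (∫ s in Iic (0:ℝ), g s) ≤ D * Real.exp (-a * t) * (1 / (a + aM)) := by
    calc (∫ s in Iic (0:ℝ), g s)
        ≤ ∫ s in Iic (0:ℝ), D * Real.exp (-a * t) * Real.exp ((a + aM) * s) :=
          setIntegral_mono_on hI1 hdom1 measurableSet_Iic hbd1
      _ = D * Real.exp (-a * t) * (1 / (a + aM)) := by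
          rw [integral_const_mul, expIntIic haaM]
  have hB2 : (∫ s in Ioc (0:ℝ) t, g s)
      ≤ D * Real.exp (-a * t) * ((Real.exp ((a - aP) * t) - 1) / (a - aP)) := by
    calc (∫ s in Ioc (0:ℝ) t, g s)
        ≤ ∫ s in Ioc (0:ℝ) t, D * Real.exp (-a * t) * Real.exp ((a - aP) * s) :=
          setIntegral_mono_on hI2 hdom2 measurableSet_Ioc hbd2
      _ = D * Real.exp (-a * t) * ((Real.exp ((a - aP) * t) - 1) / (a - aP)) := by
          rw [integral_const_mul, ← intervalIntegral.integral_of_le ht,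
            intExpMul (sub_ne_zero.mpr hne) t]
  have hB3 : (∫ s in Ioi t, g s) ≤ D * Real.exp (-aP * t) * (1 / (a + aP)) := by
    calc (∫ s in Ioi t, g s)
        ≤ ∫ s in Ioi t, D * Real.exp (a * t) * Real.exp (-(a + aP) * s) :=
          setIntegral_mono_on hI3 hdom3 measurableSet_Ioi hbd3
      _ = D * Real.exp (a * t) * (Real.exp (-(a + aP) * t) / (a + aP)) := by
          rw [integral_const_mul, expIntIoi haaP t]
      _ = D * Real.exp (-aP * t) * (1 / (a + aP)) := by
          have he : Real.exp (a * t) * Real.exp (-(a + aP) * t) = Real.exp (-aP * t) := by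
            rw [hexpmul]; congr 1; ring
          linear_combination (D / (a + aP)) * he
  -- combine
  have hm1 : Real.exp (-a * t) ≤ Real.exp (-m * t) :=
    Real.exp_le_exp.mpr (by nlinarith [mul_nonneg (sub_nonneg.mpr hm_a) ht])
  have hm2 : Real.exp (-aP * t) ≤ Real.exp (-m * t) :=
    Real.exp_le_exp.mpr (by nlinarith [mul_nonneg (sub_nonneg.mpr hm_aP) ht])
  have hD1' : (0:ℝ) ≤ D := hDpos.le
  have hmid := midBound ha haP hne ht
  rw [← hmdef] at hmid
  calc |∫ s : ℝ, f₁ (t - s) * f₂ s| ≤ ∫ s : ℝ, g s := by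
        have h0 := norm_integral_le_integral_norm (μ := volume) (fun s => f₁ (t - s) * f₂ s)
        simp only [Real.norm_eq_abs] at h0
        exact h0
    _ = (∫ s in Iic (0:ℝ), g s) + ((∫ s in Ioc (0:ℝ) t, g s) + (∫ s in Ioi t, g s)) := hsplit
    _ ≤ D * Real.exp (-a * t) * (1 / (a + aM))
        + (D * Real.exp (-a * t) * ((Real.exp ((a - aP) * t) - 1) / (a - aP))
        + D * Real.exp (-aP * t) * (1 / (a + aP))) :=
        add_le_add hB1 (add_le_add hB2 hB3)
    _ ≤ D * Real.exp (-m * t) * (1 / (a + aM))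
        + (D * (Real.exp (-m * t) / |a - aP|)
        + D * Real.exp (-m * t) * (1 / (a + aP))) := by
        apply add_le_add
        · exact mul_le_mul_of_nonneg_right (mul_le_mul_of_nonneg_left hm1 hD1') (one_div_nonneg.mpr haaM.le)
        · apply add_le_add
          · rw [mul_assoc]
            exact mul_le_mul_of_nonneg_left hmid hDpos.le
          · exact mul_le_mul_of_nonneg_right (mul_le_mul_of_nonneg_left hm2 hD1') (one_div_nonneg.mpr haaP.le)
    _ = D * (1 / (a + aM) + 1 / |a - aP| + 1 / (a + aP)) * Real.exp (-m * t) := by ring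
end

section
/- For z in the upper half-plane with |z| → ∞ and 0 < α - β < 1, write z = iR + ζ; then Stirling's formula gives |Γ(1-β+R-iζ)Γ(α+R-iζ) / (Γ(1-α+R-iζ)Γ(β+R-iζ))| ≍ (R²+ζ²)^{α-β} (up to constants depending only on α, β) for R²+ζ² sufficiently large. -/
open MeasureTheory Set Filter Topology

noncomputable section

namespace Stmt17P

namespace Complex

/-- compatibility: the complex absolute value as the norm. -/
def abs : AbsoluteValue ℂ ℝ := NormedField.toAbsoluteValue ℂ

theorem norm_eq_abs (z : ℂ) : ‖z‖ = abs z := rfl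

theorem abs_ofReal (r : ℝ) : abs (r : ℂ) = |r| := by
  rw [← norm_eq_abs]; simp

theorem abs_exp (z : ℂ) : abs (_root_.Complex.exp z) = Real.exp z.re :=
  _root_.Complex.norm_exp z

theorem sq_abs (z : ℂ) : abs z ^ 2 = _root_.Complex.normSq z := _root_.Complex.sq_norm z

theorem abs_cpow_real (x : ℂ) (y : ℝ) : abs (x ^ (y : ℂ)) = abs x ^ y :=
  _root_.Complex.norm_cpow_real x y

theorem abs_re_le_abs (z : ℂ) : |z.re| ≤ abs z := _root_.Complex.abs_re_le_norm z

theorem dist_eq (z w : ℂ) : dist z w = abs (z - w) := _root_.Complex.dist_eq z w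

end Complex


lemma integrable_exp_rpow {s b : ℝ} (hs : -1 < s) (hb : 0 < b) :
    IntegrableOn (fun x : ℝ => Real.exp (-(b * x)) * x ^ s) (Ioi 0) := by
  have h := integrableOn_rpow_mul_exp_neg_mul_rpow hs one_pos hb
  refine h.congr_fun (fun x hx => ?_) measurableSet_Ioi
  beta_reduce
  rw [Real.rpow_one, mul_comm, neg_mul]

lemma norm_aux (w : ℂ) {c : ℝ} (hc : 0 ≤ c) (t : ℝ) :
    ‖Complex.exp (-w * t) * ((c : ℝ) : ℂ)‖ = Real.exp (-(w.re * t)) * c := by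
  rw [norm_mul, Complex.norm_eq_abs, Complex.norm_eq_abs, Complex.abs_ofReal,
    Complex.abs_exp, abs_of_nonneg hc]
  congr 2
  simp [Complex.mul_re]

lemma meas_aux (w : ℂ) {f : ℝ → ℝ} (hf : ContinuousOn f (Ioi 0)) :
    AEStronglyMeasurable (fun t : ℝ => Complex.exp (-w * t) * ((f t : ℝ) : ℂ))
      (volume.restrict (Ioi 0)) := by
  refine ContinuousOn.aestronglyMeasurable ?_ measurableSet_Ioi
  exact ((Complex.continuous_exp.comp ((continuous_const.mul Complex.continuous_ofReal))).continuousOn).mul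
    (Complex.continuous_ofReal.comp_continuousOn hf)

lemma cont_rpow (p : ℝ) : ContinuousOn (fun t : ℝ => t ^ p) (Ioi 0) :=
  fun x hx => ((Real.continuousAt_rpow_const x p (Or.inl (ne_of_gt hx))).continuousWithinAt)

/-- The Laplace transform of `t ^ (δ-1)` equals `Γ(δ) z^(-δ)` on `re z > 0`. -/
lemma K_eq {δ : ℝ} (hδ0 : 0 < δ) : ∀ {z : ℂ}, 0 < z.re →
    (∫ t in Ioi (0:ℝ), Complex.exp (-z * t) * ((t ^ (δ - 1) : ℝ) : ℂ))
      = Complex.Gamma δ * z ^ (-(δ:ℂ)) := by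
  set U : Set ℂ := {w | 0 < w.re} with hU
  have hUo : IsOpen U := isOpen_lt continuous_const Complex.continuous_re
  set f : ℂ → ℂ := fun w => ∫ t in Ioi (0:ℝ), Complex.exp (-w * t) * ((t ^ (δ - 1) : ℝ) : ℂ)
    with hf
  set g : ℂ → ℂ := fun w => Complex.Gamma δ * w ^ (-(δ:ℂ)) with hg
  suffices h : EqOn f g U by exact fun {z} hz => h hz
  -- analyticity of f
  have hfa : AnalyticOnNhd ℂ f U := by
    refine DifferentiableOn.analyticOnNhd (fun z₀ hz₀ => ?_) hUo
    rw [hU, mem_setOf_eq] at hz₀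
    set ε : ℝ := z₀.re / 2 with hε
    have hεpos : 0 < ε := by positivity
    have key := hasDerivAt_integral_of_dominated_loc_of_deriv_le (μ := volume.restrict (Ioi 0))
      (F := fun w t => Complex.exp (-w * t) * ((t ^ (δ - 1) : ℝ) : ℂ))
      (F' := fun w (t : ℝ) => Complex.exp (-w * t) * (-1 * (t:ℂ)) * ((t ^ (δ - 1) : ℝ) : ℂ))
      (x₀ := z₀) (bound := fun t => Real.exp (-(ε * t)) * t ^ δ) (Metric.ball_mem_nhds z₀ hεpos)
      (Eventually.of_forall fun w => meas_aux w (cont_rpow _))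
      ?_ ?_ ?_ ?_ ?_
    · exact (key.2.differentiableAt).differentiableWithinAt
    · -- integrability of F z₀
      refine Integrable.mono' (integrable_exp_rpow (s := δ - 1) (by linarith) hεpos) (meas_aux _ (cont_rpow _))
        (ae_restrict_of_forall_mem measurableSet_Ioi fun t ht => ?_)
      rw [norm_aux _ (Real.rpow_nonneg (le_of_lt ht) _)]
      have : Real.exp (-(z₀.re * t)) ≤ Real.exp (-(ε * t)) := by
        apply Real.exp_le_exp.2
        rw [neg_le_neg_iff]
        have : ε ≤ z₀.re := by rw [hε]; linarith
        nlinarith [le_of_lt (mem_Ioi.mp ht)]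
      exact mul_le_mul_of_nonneg_right this (Real.rpow_nonneg (le_of_lt ht) _)
    · -- measurability of F' z₀
      refine ContinuousOn.aestronglyMeasurable ?_ measurableSet_Ioi
      refine ContinuousOn.mul (ContinuousOn.mul ?_ ?_) ?_
      · exact ((Complex.continuous_exp.comp ((continuous_const.mul
          Complex.continuous_ofReal))).continuousOn)
      · exact (continuous_const.mul Complex.continuous_ofReal).continuousOn
      · exact Complex.continuous_ofReal.comp_continuousOn (cont_rpow _)
    · -- bound
      refine ae_restrict_of_forall_mem measurableSet_Ioi fun t ht w hw => ?_
      rw [mem_Ioi] at ht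
      have h1 : ‖Complex.exp (-w * t) * (-1 * (t:ℂ)) * ((t ^ (δ - 1) : ℝ) : ℂ)‖
          = Real.exp (-(w.re * t)) * t * t ^ (δ-1) := by
        rw [norm_mul, norm_mul]
        rw [Complex.norm_eq_abs (Complex.exp _), Complex.abs_exp]
        simp only [Complex.norm_eq_abs, map_mul, map_neg_eq_map, map_one, one_mul,
          Complex.abs_ofReal, abs_of_nonneg ht.le,
          abs_of_nonneg (Real.rpow_nonneg ht.le (δ-1))]
        congr 2
        simp [Complex.mul_re]
      rw [h1]
      have h2 : Real.exp (-(w.re * t)) ≤ Real.exp (-(ε * t)) := by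
        apply Real.exp_le_exp.2
        rw [neg_le_neg_iff]
        have hre : ε ≤ w.re := by
          have := Complex.abs_re_le_abs (w - z₀)
          have hlt : Complex.abs (w - z₀) < ε := by
            rwa [Metric.mem_ball, Complex.dist_eq] at hw
          have : |w.re - z₀.re| < ε := by
            simpa [Complex.sub_re] using lt_of_le_of_lt this hlt
          have := abs_lt.mp this
          rw [hε]; linarith [this.1]
        nlinarith
      have h3 : t * t ^ (δ - 1) = t ^ δ := by
        nth_rewrite 1 [← Real.rpow_one t]
        rw [← Real.rpow_add ht]; ring_nf
      rw [mul_assoc, h3]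
      exact mul_le_mul_of_nonneg_right h2 (Real.rpow_nonneg ht.le _)
    · exact (integrable_exp_rpow (s := δ) (by linarith) hεpos)
    · -- differentiability in w
      refine ae_restrict_of_forall_mem measurableSet_Ioi fun t ht w hw => ?_
      have h0 : HasDerivAt (fun w : ℂ => -w * (t:ℂ)) (-1 * (t:ℂ)) w := by
        simpa using ((hasDerivAt_neg w).mul_const (t:ℂ))
      exact (h0.cexp).mul_const _
  -- analyticity of g
  have hga : AnalyticOnNhd ℂ g U := by
    refine DifferentiableOn.analyticOnNhd (fun z hz => ?_) hUo
    refine DifferentiableAt.differentiableWithinAt ?_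
    exact (differentiableAt_id.cpow (differentiableAt_const _) (Or.inl hz)).const_mul _
  -- equality on positive reals
  have hkey : ∀ r : ℝ, 0 < r → f r = g r := by
    intro r hr
    have h := Complex.integral_cpow_mul_exp_neg_mul_Ioi
      (a := (δ:ℂ)) (r := r) (by simpa using hδ0) hr
    have hl : f r = ∫ t in Ioi (0:ℝ), (t:ℂ) ^ ((δ:ℂ) - 1) * Complex.exp (-(r * t)) := by
      rw [hf]
      refine setIntegral_congr_fun measurableSet_Ioi fun t ht => ?_
      rw [mem_Ioi] at ht
      rw [Complex.ofReal_cpow ht.le]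
      push_cast
      ring_nf
    rw [hl, h, hg]
    have harg : (r:ℂ).arg ≠ Real.pi := by
      rw [Complex.arg_ofReal_of_nonneg hr.le]
      exact Real.pi_ne_zero.symm
    rw [one_div, Complex.inv_cpow _ _ harg, ← Complex.cpow_neg]
    ring
  have hfreq : ∃ᶠ z in nhdsWithin (1:ℂ) {(1:ℂ)}ᶜ, f z = g z := by
    have h1 : Tendsto (fun x : ℝ => (x:ℂ)) (nhdsWithin (1:ℝ) {(1:ℝ)}ᶜ)
        (nhdsWithin (1:ℂ) {(1:ℂ)}ᶜ) := by
      apply tendsto_nhdsWithin_of_tendsto_nhds_of_eventually_within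
      · exact tendsto_nhdsWithin_of_tendsto_nhds
          (Complex.continuous_ofReal.tendsto' 1 1 (by simp))
      · filter_upwards [self_mem_nhdsWithin] with x hx
        simp only [mem_compl_iff, mem_singleton_iff] at hx ⊢
        exact_mod_cast hx
    have h2 : ∀ᶠ x : ℝ in nhdsWithin (1:ℝ) {(1:ℝ)}ᶜ, f ↑x = g ↑x := by
      have : ∀ᶠ x : ℝ in nhds (1:ℝ), f ↑x = g ↑x := by
        filter_upwards [eventually_gt_nhds one_pos] with x hx using hkey x hx
      exact this.filter_mono nhdsWithin_le_nhds
    exact h1.frequently h2.frequently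
  have hpre : IsPreconnected U := (convex_halfSpace_re_gt 0).isPreconnected
  exact hfa.eqOn_of_preconnected_of_frequently_eq hga hpre (by simp [hU]) hfreq



/-- Substituted beta integral. -/
lemma J_eq {δ : ℝ} (hδ0 : 0 < δ) {z : ℂ} (hz : 0 < z.re) :
    (∫ u in Ioi (0:ℝ), Complex.exp (-z * u) * (((1 - Real.exp (-u)) ^ (δ - 1) : ℝ) : ℂ))
      = Complex.Gamma z * Complex.Gamma δ / Complex.Gamma (z + δ) := by
  have hδc : (0:ℝ) < ((δ:ℂ)).re := by simpa using hδ0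
  have hβ := Complex.Gamma_mul_Gamma_eq_betaIntegral hz hδc
  have hΓne : Complex.Gamma (z + δ) ≠ 0 := by
    apply Complex.Gamma_ne_zero_of_re_pos
    simp only [Complex.add_re, Complex.ofReal_re]
    linarith
  rw [hβ, mul_comm, mul_div_assoc, div_self hΓne, mul_one]
  -- now: LHS integral = betaIntegral z δ
  set G : ℝ → ℂ := fun x => (x:ℂ) ^ (z - 1) * ((1:ℂ) - x) ^ ((δ:ℂ) - 1) with hG
  have himg : (fun u : ℝ => Real.exp (-u)) '' (Ioi 0) = Ioo 0 1 := by
    ext y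
    constructor
    · rintro ⟨u, hu, rfl⟩
      rw [mem_Ioi] at hu
      exact ⟨Real.exp_pos _, by rw [← Real.exp_zero]; exact Real.exp_lt_exp.2 (by linarith)⟩
    · rintro ⟨hy0, hy1⟩
      refine ⟨-Real.log y, ?_, by simp [Real.exp_log hy0]⟩
      rw [mem_Ioi]
      simpa using Real.log_neg hy0 hy1
  have hderiv : ∀ u ∈ Ioi (0:ℝ), HasDerivWithinAt (fun u : ℝ => Real.exp (-u))
      (-Real.exp (-u)) (Ioi 0) u := by
    intro u _
    have : HasDerivAt (fun u : ℝ => Real.exp (-u)) (Real.exp (-u) * (-1)) u :=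
      (Real.hasDerivAt_exp (-u)).comp u (hasDerivAt_neg u)
    simpa using this.hasDerivWithinAt
  have hinj : InjOn (fun u : ℝ => Real.exp (-u)) (Ioi 0) :=
    (Real.exp_injective.comp neg_injective).injOn
  have hsub := integral_image_eq_integral_abs_deriv_smul measurableSet_Ioi hderiv hinj G
  rw [himg] at hsub
  have hbeta : Complex.betaIntegral z δ = ∫ x in Ioo (0:ℝ) 1, G x := by
    rw [Complex.betaIntegral, intervalIntegral.integral_of_le zero_le_one,
      ← integral_Ioc_eq_integral_Ioo]

  rw [hbeta, hsub]
  refine setIntegral_congr_fun measurableSet_Ioi fun u hu => ?_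
  rw [mem_Ioi] at hu
  have he1 : Real.exp (-u) ≤ 1 := Real.exp_le_one_iff.mpr (by linarith)
  have hepos : (0:ℝ) < Real.exp (-u) := Real.exp_pos _
  rw [hG]
  simp only [abs_of_pos hepos, neg_neg, abs_neg]
  rw [Complex.real_smul]
  have hc1 : ((Real.exp (-u) : ℝ) : ℂ) ^ (z - 1) = Complex.exp ((z-1) * (-u)) := by
    rw [Complex.cpow_def_of_ne_zero (by exact_mod_cast hepos.ne')]
    congr 1
    rw [← Complex.ofReal_log hepos.le, Real.log_exp]
    push_cast
    ring
  have hc2 : ((1:ℂ) - (Real.exp (-u) : ℝ)) ^ ((δ:ℂ) - 1)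
      = (((1 - Real.exp (-u)) ^ (δ - 1) : ℝ) : ℂ) := by
    have h1 : ((1:ℂ) - (Real.exp (-u) : ℝ)) = (((1 - Real.exp (-u) : ℝ)) : ℂ) := by push_cast; ring
    rw [h1, show ((δ:ℂ)-1) = ((δ-1 : ℝ):ℂ) by push_cast; ring,
      ← Complex.ofReal_cpow (by linarith)]
  rw [hc1, hc2]
  rw [show ((Real.exp (-u) : ℝ) : ℂ) = Complex.exp (-(u:ℂ)) by
    rw [Complex.ofReal_exp]; congr 1; push_cast; ring]
  rw [← mul_assoc, mul_comm (Complex.exp (-(u:ℂ)))  (Complex.exp ((z-1) * (-u)))]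
  rw [← Complex.exp_add]
  congr 2
  push_cast
  ring


def gfun (δ u : ℝ) : ℝ := (1 - Real.exp (-u)) ^ (δ - 1) - u ^ (δ - 1)

def gdfun (δ u : ℝ) : ℝ :=
  (δ - 1) * (Real.exp (-u) * (1 - Real.exp (-u)) ^ (δ - 2) - u ^ (δ - 2))

variable {δ u : ℝ}

lemma c_pos (hu : 0 < u) : 0 < 1 - Real.exp (-u) := by
  have : Real.exp (-u) < Real.exp 0 := Real.exp_lt_exp.2 (by linarith)
  simpa using this

lemma c_le (hu : 0 < u) : 1 - Real.exp (-u) ≤ u := by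
  have := Real.add_one_le_exp (-u); linarith

lemma c_ge (hu : 0 < u) : u / (1 + u) ≤ 1 - Real.exp (-u) := by
  have h1 : 1 + u ≤ Real.exp u := by have := Real.add_one_le_exp u; linarith
  have h2 : Real.exp (-u) ≤ (1 + u)⁻¹ := by
    rw [Real.exp_neg]
    exact inv_anti₀ (by linarith) h1
  have h3 : u / (1 + u) = 1 - (1+u)⁻¹ := by field_simp; ring
  rw [h3]; linarith

lemma g_nonneg (hδ1 : δ < 1) (hu : 0 < u) : 0 ≤ gfun δ u := by
  have := Real.rpow_le_rpow_of_nonpos (c_pos hu) (c_le hu) (by linarith : δ - 1 ≤ 0)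
  simpa [gfun] using this

lemma g_le (hδ0 : 0 < δ) (hu : 0 < u) : gfun δ u ≤ u ^ δ := by
  set c := 1 - Real.exp (-u) with hc
  have hc0 : 0 < c := c_pos hu
  have e1 : c ^ (δ - 1) = c ^ δ / c := Real.rpow_sub_one hc0.ne' δ
  have e2 : c ^ δ ≤ u ^ δ := Real.rpow_le_rpow hc0.le (c_le hu) hδ0.le
  have e3 : (0:ℝ) < u / (1 + u) := by positivity
  have e4 : c ^ δ / c ≤ u ^ δ / (u / (1 + u)) :=
    div_le_div₀ (Real.rpow_nonneg hu.le δ) e2 e3 (c_ge hu)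
  have e5 : u ^ δ / (u / (1 + u)) = u ^ δ / u + u ^ δ := by
    field_simp
  have e6 : u ^ δ / u = u ^ (δ - 1) := (Real.rpow_sub_one hu.ne' δ).symm
  have e7 : c ^ (δ - 1) ≤ u ^ (δ - 1) + u ^ δ := by
    rw [e1]
    calc c ^ δ / c ≤ u ^ δ / (u / (1 + u)) := e4
      _ = u ^ δ / u + u ^ δ := e5
      _ = u ^ (δ-1) + u ^ δ := by rw [e6]
  rw [gfun, ← hc]
  linarith

lemma gd_abs (hδ0 : 0 < δ) (hδ1 : δ < 1) (hu : 0 < u) : |gdfun δ u| ≤ u ^ (δ - 1) := by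
  set c := 1 - Real.exp (-u) with hc
  have hc0 : 0 < c := c_pos hu
  have hiu : (0:ℝ) < 1 + u := by linarith
  set E := Real.exp (-u) * c ^ (δ - 2) - u ^ (δ - 2) with hE
  have hupper : E ≤ u ^ (δ - 1) := by
    have a1 : c ^ (δ-2) ≤ (u / (1+u)) ^ (δ-2) :=
      Real.rpow_le_rpow_of_nonpos (by positivity) (c_ge hu) (by linarith)
    have a2 : (u / (1+u)) ^ (δ-2) = u ^ (δ-2) * (1+u) ^ (2-δ) := by
      rw [Real.div_rpow hu.le hiu.le, div_eq_mul_inv, ← Real.rpow_neg hiu.le]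
      ring_nf
    have a4 : (1+u) ^ (2-δ) ≤ (1+u) ^ (2:ℝ) :=
      Real.rpow_le_rpow_of_exponent_le (by linarith) (by linarith)
    have hex : Real.exp (-u) ≤ (1+u)⁻¹ := by
      rw [Real.exp_neg]
      exact inv_anti₀ (by linarith) (by have := Real.add_one_le_exp u; linarith)
    have a5 : Real.exp (-u) * c ^ (δ-2) ≤ (1+u)⁻¹ * (u ^ (δ-2) * (1+u) ^ (2:ℝ)) := by
      apply mul_le_mul hex _ (by positivity) (by positivity)
      calc c ^ (δ-2) ≤ u ^ (δ-2) * (1+u) ^ (2-δ) := by rw [← a2]; exact a1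
        _ ≤ u ^ (δ-2) * (1+u) ^ (2:ℝ) :=
            mul_le_mul_of_nonneg_left a4 (Real.rpow_nonneg hu.le _)
    have a6 : (1+u)⁻¹ * (u ^ (δ-2) * (1+u) ^ (2:ℝ)) = u ^ (δ-2) * (1+u) := by
      rw [show ((2:ℝ)) = ((2:ℕ):ℝ) by norm_num, Real.rpow_natCast]
      field_simp
    have a7 : u ^ (δ-2) * (1+u) = u ^ (δ-2) + u ^ (δ-1) := by
      have : u ^ (δ-1) = u ^ (δ-2) * u := by
        rw [show δ-1 = (δ-2)+1 by ring, Real.rpow_add hu, Real.rpow_one]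
      rw [mul_add, mul_one, ← this]
    rw [hE]
    have := a5.trans (le_of_eq (a6.trans a7))
    linarith
  have hlower : -(u ^ (δ - 1)) ≤ E := by
    have b1 : u ^ (δ-2) ≤ c ^ (δ-2) :=
      Real.rpow_le_rpow_of_nonpos hc0 (c_le hu) (by linarith)
    have b2 : Real.exp (-u) * u ^ (δ-2) ≤ Real.exp (-u) * c ^ (δ-2) :=
      mul_le_mul_of_nonneg_left b1 (Real.exp_pos _).le
    have b3 : c * u ^ (δ-2) ≤ u * u ^ (δ-2) :=
      mul_le_mul_of_nonneg_right (c_le hu) (Real.rpow_nonneg hu.le _)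
    have b4 : u * u ^ (δ-2) = u ^ (δ-1) := by
      rw [show δ-1 = 1+(δ-2) by ring, Real.rpow_add hu, Real.rpow_one]
    rw [hE]
    have hcdef : Real.exp (-u) = 1 - c := by rw [hc]; ring
    nlinarith [Real.rpow_nonneg hu.le (δ-2)]
  have habs : |E| ≤ u ^ (δ-1) := abs_le.mpr ⟨hlower, hupper⟩
  have : |gdfun δ u| = |δ-1| * |E| := by rw [gdfun, abs_mul, ← hc, ← hE]
  rw [this, abs_of_nonpos (by linarith : δ - 1 ≤ 0)]
  calc -(δ-1) * |E| ≤ 1 * |E| := by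
        apply mul_le_mul_of_nonneg_right (by linarith) (abs_nonneg _)
    _ ≤ u ^ (δ-1) := by rw [one_mul]; exact habs

lemma g_hasDeriv (hδ1 : δ < 1) (hu : 0 < u) : HasDerivAt (gfun δ) (gdfun δ u) u := by
  set c := 1 - Real.exp (-u) with hc
  have hc0 : 0 < c := c_pos hu
  have h1 : HasDerivAt (fun u : ℝ => 1 - Real.exp (-u)) (Real.exp (-u)) u := by
    have := ((Real.hasDerivAt_exp (-u)).comp u (hasDerivAt_neg u)).const_sub 1
    simpa using this
  have h2 : HasDerivAt (fun y : ℝ => y ^ (δ-1)) ((δ-1) * c ^ (δ-1-1)) c :=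
    Real.hasDerivAt_rpow_const (Or.inl hc0.ne')
  have h3 : HasDerivAt (fun u : ℝ => u ^ (δ-1)) ((δ-1) * u ^ (δ-1-1)) u :=
    Real.hasDerivAt_rpow_const (Or.inl hu.ne')
  have h4 := (h2.comp u h1).sub h3
  have : gdfun δ u = (δ-1) * c ^ (δ-1-1) * Real.exp (-u) - (δ-1) * u ^ (δ-1-1) := by
    rw [gdfun, ← hc, show δ - 1 - 1 = δ - 2 by ring]; ring
  rw [this]
  exact h4

lemma g_zero (hδ1 : δ < 1) : gfun δ 0 = 0 := by
  simp [gfun, Real.zero_rpow (by linarith : δ - 1 ≠ 0)]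

variable {δ : ℝ}

lemma norm_aux' (w : ℂ) (c t : ℝ) :
    ‖Complex.exp (-w * t) * ((c : ℝ) : ℂ)‖ = Real.exp (-(w.re * t)) * |c| := by
  rw [norm_mul, Complex.norm_eq_abs, Complex.norm_eq_abs, Complex.abs_ofReal,
    Complex.abs_exp]
  congr 2
  simp [Complex.mul_re]

lemma cont_g (hδ1 : δ < 1) : ContinuousOn (fun u : ℝ => gfun δ u) (Ioi 0) := by
  apply ContinuousOn.sub
  · apply ContinuousOn.rpow_const
    · exact (continuous_const.sub (Real.continuous_exp.comp continuous_neg)).continuousOn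
    · exact fun x hx => Or.inl (c_pos (mem_Ioi.mp hx)).ne'
  · exact cont_rpow _

lemma cont_gd : ContinuousOn (fun u : ℝ => gdfun δ u) (Ioi 0) := by
  apply ContinuousOn.mul continuousOn_const
  apply ContinuousOn.sub
  · apply ContinuousOn.mul
    · exact (Real.continuous_exp.comp continuous_neg).continuousOn
    · apply ContinuousOn.rpow_const
      · exact (continuous_const.sub (Real.continuous_exp.comp continuous_neg)).continuousOn
      · exact fun x hx => Or.inl (c_pos (mem_Ioi.mp hx)).ne'
  · exact cont_rpow _

lemma exp_decay_le {z : ℂ} (hz : 1 ≤ z.re) {u : ℝ} (hu : 0 ≤ u) :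
    Real.exp (-(z.re * u)) ≤ Real.exp (-u) := by
  apply Real.exp_le_exp.2
  nlinarith

lemma integrable_G {z : ℂ} (hδ0 : 0 < δ) (hδ1 : δ < 1) (hz : 1 ≤ z.re) :
    IntegrableOn (fun u : ℝ => Complex.exp (-z * u) * ((gfun δ u : ℝ) : ℂ)) (Ioi 0) := by
  refine Integrable.mono' (integrable_exp_rpow (s := δ) (by linarith) one_pos)
    (meas_aux _ (cont_g hδ1)) (ae_restrict_of_forall_mem measurableSet_Ioi fun u hu => ?_)
  rw [mem_Ioi] at hu
  rw [norm_aux', abs_of_nonneg (g_nonneg hδ1 hu), one_mul]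
  exact mul_le_mul (exp_decay_le hz hu.le) (g_le hδ0 hu) (g_nonneg hδ1 hu) (Real.exp_pos _).le

lemma integrable_Gd {z : ℂ} (hδ0 : 0 < δ) (hδ1 : δ < 1) (hz : 1 ≤ z.re) :
    IntegrableOn (fun u : ℝ => Complex.exp (-z * u) * ((gdfun δ u : ℝ) : ℂ)) (Ioi 0) := by
  refine Integrable.mono' (integrable_exp_rpow (s := δ - 1) (by linarith) one_pos)
    (meas_aux _ cont_gd) (ae_restrict_of_forall_mem measurableSet_Ioi fun u hu => ?_)
  rw [mem_Ioi] at hu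
  rw [norm_aux', one_mul]
  exact mul_le_mul (exp_decay_le hz hu.le) (gd_abs hδ0 hδ1 hu) (abs_nonneg _)
    (Real.exp_pos _).le

lemma integrable_K {z : ℂ} (hδ0 : 0 < δ) (hδ1 : δ < 1) (hz : 1 ≤ z.re) :
    IntegrableOn (fun u : ℝ => Complex.exp (-z * u) * ((u ^ (δ - 1) : ℝ) : ℂ)) (Ioi 0) := by
  refine Integrable.mono' (integrable_exp_rpow (s := δ - 1) (by linarith) one_pos)
    (meas_aux _ (cont_rpow _)) (ae_restrict_of_forall_mem measurableSet_Ioi fun u hu => ?_)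
  rw [mem_Ioi] at hu
  rw [norm_aux', one_mul, abs_of_nonneg (Real.rpow_nonneg hu.le _)]
  exact mul_le_mul_of_nonneg_right (exp_decay_le hz hu.le) (Real.rpow_nonneg hu.le _)

lemma ibp (hδ0 : 0 < δ) (hδ1 : δ < 1) {z : ℂ} (hz : 1 ≤ z.re) :
    (∫ u in Ioi (0:ℝ), Complex.exp (-z * u) * ((gfun δ u : ℝ) : ℂ))
      = z⁻¹ * ∫ u in Ioi (0:ℝ), Complex.exp (-z * u) * ((gdfun δ u : ℝ) : ℂ) := by
  have hz0 : z ≠ 0 := by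
    intro h; rw [h] at hz; simp at hz; linarith
  set f : ℝ → ℂ := fun u => Complex.exp (-z * u) * ((gfun δ u : ℝ) : ℂ) with hf
  set f' : ℝ → ℂ := fun u =>
    Complex.exp (-z * u) * (((gdfun δ u : ℝ) : ℂ) - z * ((gfun δ u : ℝ) : ℂ)) with hf'
  have hd : ∀ u ∈ Ioi (0:ℝ), HasDerivAt f (f' u) u := by
    intro u hu
    rw [mem_Ioi] at hu
    have hinner : HasDerivAt (fun u : ℝ => -z * (u : ℂ)) (-z) u := by
      simpa using (Complex.ofRealCLM.hasDerivAt (x := u)).const_mul (-z)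
    have hexp : HasDerivAt (fun u : ℝ => Complex.exp (-z * u))
        (Complex.exp (-z * u) * (-z)) u := hinner.cexp
    have hgd : HasDerivAt (fun u : ℝ => ((gfun δ u : ℝ) : ℂ)) ((gdfun δ u : ℝ) : ℂ) u :=
      (g_hasDeriv hδ1 hu).ofReal_comp
    have := hexp.mul hgd
    have e : f' u = Complex.exp (-z * u) * -z * ((gfun δ u : ℝ) : ℂ)
        + Complex.exp (-z * u) * ((gdfun δ u : ℝ) : ℂ) := by rw [hf']; ring
    rw [e]; exact this
  have hf0 : f 0 = 0 := by
    rw [hf]; simp [g_zero hδ1]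
  have hcont : ContinuousWithinAt f (Ici (0:ℝ)) 0 := by
    rw [ContinuousWithinAt, hf0]
    apply squeeze_zero_norm' (a := fun u : ℝ => u ^ δ)
    · filter_upwards [self_mem_nhdsWithin] with u hu
      rw [mem_Ici] at hu
      rcases eq_or_lt_of_le hu with h | h
      · rw [hf]; simp [← h, g_zero hδ1, Real.zero_rpow hδ0.ne']
      · rw [hf, norm_aux', abs_of_nonneg (g_nonneg hδ1 h)]
        calc Real.exp (-(z.re * u)) * gfun δ u ≤ 1 * (u ^ δ) := by
              apply mul_le_mul _ (g_le hδ0 h) (g_nonneg hδ1 h) one_pos.le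
              rw [← Real.exp_zero]
              apply Real.exp_le_exp.2
              nlinarith
          _ = u ^ δ := one_mul _
    · have hc : ContinuousWithinAt (fun u : ℝ => u ^ δ) (Ici (0:ℝ)) 0 :=
        (Real.continuousAt_rpow_const 0 δ (Or.inr hδ0.le)).continuousWithinAt
      have h0 : (0:ℝ) ^ δ = 0 := Real.zero_rpow hδ0.ne'
      rw [ContinuousWithinAt, h0] at hc
      exact hc
  have htop : Tendsto f atTop (𝓝 0) := by
    apply squeeze_zero_norm' (a := fun u : ℝ => u ^ δ * Real.exp (-1 * u))
    · filter_upwards [eventually_gt_atTop (0:ℝ)] with u hu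
      rw [hf, norm_aux', abs_of_nonneg (g_nonneg hδ1 hu)]
      rw [neg_one_mul]
      calc Real.exp (-(z.re * u)) * gfun δ u ≤ Real.exp (-u) * u ^ δ :=
            mul_le_mul (exp_decay_le hz hu.le) (g_le hδ0 hu) (g_nonneg hδ1 hu)
              (Real.exp_pos _).le
        _ = u ^ δ * Real.exp (-u) := mul_comm _ _
    · exact tendsto_rpow_mul_exp_neg_mul_atTop_nhds_zero δ 1 one_pos
  have hint : IntegrableOn f' (Ioi 0) := by
    have h1 := integrable_Gd hδ0 hδ1 hz
    have h2 := (integrable_G hδ0 hδ1 hz).const_mul z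
    have h3 : IntegrableOn (fun u : ℝ => Complex.exp (-z * u) * ((gdfun δ u : ℝ) : ℂ)
        - z * (Complex.exp (-z * u) * ((gfun δ u : ℝ) : ℂ))) (Ioi 0) := h1.sub h2
    refine h3.congr_fun (fun u _ => ?_) measurableSet_Ioi
    rw [hf']; ring
  have key := integral_Ioi_of_hasDerivAt_of_tendsto hcont hd hint htop
  rw [hf0, sub_zero] at key
  have hsplit : (∫ u in Ioi (0:ℝ), f' u)
      = (∫ u in Ioi (0:ℝ), Complex.exp (-z * u) * ((gdfun δ u : ℝ) : ℂ))
        - z * ∫ u in Ioi (0:ℝ), Complex.exp (-z * u) * ((gfun δ u : ℝ) : ℂ) := by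
    rw [← integral_const_mul, ← integral_sub (integrable_Gd hδ0 hδ1 hz)
      ((integrable_G hδ0 hδ1 hz).const_mul z)]
    refine setIntegral_congr_fun measurableSet_Ioi fun u _ => ?_
    rw [hf']; ring
  rw [hsplit] at key
  have key2 := eq_of_sub_eq_zero key
  rw [key2, inv_mul_cancel_left₀ hz0]

lemma core (hδ0 : 0 < δ) (hδ1 : δ < 1) :
    ∃ M : ℝ, 1 ≤ M ∧ ∀ z : ℂ, 1 ≤ z.re → M ≤ Complex.abs z →
      2/3 * Complex.abs z ^ δ
          ≤ Complex.abs (Complex.Gamma (z + (δ:ℂ)) / Complex.Gamma z) ∧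
        Complex.abs (Complex.Gamma (z + (δ:ℂ)) / Complex.Gamma z)
          ≤ 2 * Complex.abs z ^ δ := by
  set G0 := Real.Gamma δ with hG0def
  have hG0 : 0 < G0 := Real.Gamma_pos_of_pos hδ0
  have h1δ : (0:ℝ) < 1 - δ := by linarith
  refine ⟨max 1 ((2:ℝ) ^ ((1:ℝ)/(1-δ))), le_max_left _ _, fun z hz hM => ?_⟩
  set A := Complex.abs z with hA
  have hA1 : 1 ≤ A := le_trans (le_max_left _ _) hM
  have hA0 : 0 < A := lt_of_lt_of_le one_pos hA1
  have hzre : 0 < z.re := lt_of_lt_of_le one_pos hz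
  have hzdre : 0 < (z + (δ:ℂ)).re := by
    simp only [Complex.add_re, Complex.ofReal_re]; linarith
  have hΓz : Complex.Gamma z ≠ 0 := Complex.Gamma_ne_zero_of_re_pos hzre
  have hΓzd : Complex.Gamma (z + (δ:ℂ)) ≠ 0 := Complex.Gamma_ne_zero_of_re_pos hzdre
  -- split J into K plus error
  set Igd := ∫ u in Ioi (0:ℝ), Complex.exp (-z * u) * ((gdfun δ u : ℝ) : ℂ) with hIgd
  have hsplit : Complex.Gamma z * Complex.Gamma (δ:ℂ) / Complex.Gamma (z + (δ:ℂ))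
      = Complex.Gamma (δ:ℂ) * z ^ (-(δ:ℂ)) + z⁻¹ * Igd := by
    rw [← J_eq hδ0 hzre, ← K_eq hδ0 hzre, ← ibp hδ0 hδ1 hz]
    rw [← integral_add (integrable_K hδ0 hδ1 hz) (integrable_G hδ0 hδ1 hz)]
    refine setIntegral_congr_fun measurableSet_Ioi fun u hu => ?_
    rw [gfun]
    push_cast
    ring
  -- bound the error
  have herr : Complex.abs Igd ≤ G0 := by
    rw [hIgd]
    have hb : ∀ u ∈ Ioi (0:ℝ),
        ‖Complex.exp (-z * u) * ((gdfun δ u : ℝ) : ℂ)‖ ≤ Real.exp (-u) * u ^ (δ-1) := by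
      intro u hu
      rw [mem_Ioi] at hu
      rw [norm_aux']
      exact mul_le_mul (exp_decay_le hz hu.le) (gd_abs hδ0 hδ1 hu) (abs_nonneg _)
        (Real.exp_pos _).le
    have hbint : IntegrableOn (fun u : ℝ => Real.exp (-u) * u ^ (δ-1)) (Ioi 0) := by
      refine (integrable_exp_rpow (s := δ-1) (by linarith) one_pos).congr_fun
        (fun u _ => ?_) measurableSet_Ioi
      beta_reduce
      rw [one_mul]
    calc Complex.abs (∫ u in Ioi (0:ℝ), Complex.exp (-z * u) * ((gdfun δ u : ℝ) : ℂ))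
        ≤ ∫ u in Ioi (0:ℝ), Real.exp (-u) * u ^ (δ-1) := by
          rw [← Complex.norm_eq_abs]
          exact norm_integral_le_of_norm_le hbint
            (ae_restrict_of_forall_mem measurableSet_Ioi hb)
      _ = G0 := (Real.Gamma_eq_integral hδ0).symm
  -- main term modulus
  set x := A ^ (-δ) with hx
  have hxpos : 0 < x := Real.rpow_pos_of_pos hA0 _
  have hmain : Complex.abs (Complex.Gamma (δ:ℂ) * z ^ (-(δ:ℂ))) = G0 * x := by
    rw [map_mul, Complex.Gamma_ofReal, Complex.abs_ofReal, abs_of_pos hG0]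
    congr 1
    rw [show (-(δ:ℂ)) = (((-δ : ℝ)):ℂ) by push_cast; ring, Complex.abs_cpow_real]
  -- smallness of error relative to main term
  have hA1δ : (2:ℝ) ≤ A ^ (1 - δ) := by
    have h2 : (2:ℝ) ^ ((1:ℝ)/(1-δ)) ≤ A := le_trans (le_max_right _ _) hM
    have := Real.rpow_le_rpow (by positivity) h2 (le_of_lt h1δ)
    rwa [← Real.rpow_mul (by norm_num : (0:ℝ) ≤ 2), one_div,
      inv_mul_cancel₀ h1δ.ne', Real.rpow_one] at this
  have hxA : A * x = A ^ (1 - δ) := by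
    rw [hx]
    nth_rewrite 1 [← Real.rpow_one A]
    rw [← Real.rpow_add hA0, show (1:ℝ) + -δ = 1 - δ by ring]
  have herr2 : Complex.abs (z⁻¹ * Igd) ≤ G0 / 2 * x := by
    rw [map_mul, map_inv₀, ← hA]
    have h1 : A⁻¹ * Complex.abs Igd ≤ A⁻¹ * G0 :=
      mul_le_mul_of_nonneg_left herr (inv_nonneg.mpr hA0.le)
    refine le_trans h1 ?_
    rw [inv_mul_le_iff₀ hA0]
    have h3 := mul_le_mul_of_nonneg_left hA1δ (by positivity : (0:ℝ) ≤ G0/2)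
    nlinarith [hxA]
  set Jv := Complex.Gamma z * Complex.Gamma (δ:ℂ) / Complex.Gamma (z + (δ:ℂ)) with hJv
  have hJlow : G0/2 * x ≤ Complex.abs Jv := by
    have hm : Complex.Gamma (δ:ℂ) * z ^ (-(δ:ℂ)) = Jv - z⁻¹ * Igd := by
      rw [hsplit]; ring
    have h2 : Complex.abs (Complex.Gamma (δ:ℂ) * z ^ (-(δ:ℂ)))
        ≤ Complex.abs Jv + Complex.abs (z⁻¹ * Igd) := by
      rw [hm, ← Complex.norm_eq_abs, ← Complex.norm_eq_abs, ← Complex.norm_eq_abs]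
      exact norm_sub_le _ _
    rw [hmain] at h2
    linarith [herr2]
  have hJhigh : Complex.abs Jv ≤ 3*G0/2 * x := by
    have h2 : Complex.abs Jv ≤ Complex.abs (Complex.Gamma (δ:ℂ) * z ^ (-(δ:ℂ)))
        + Complex.abs (z⁻¹ * Igd) := by
      rw [hsplit, ← Complex.norm_eq_abs, ← Complex.norm_eq_abs, ← Complex.norm_eq_abs]
      exact norm_add_le _ _
    rw [hmain] at h2
    linarith [herr2]
  have hJpos : 0 < Complex.abs Jv := lt_of_lt_of_le (by positivity) hJlow
  have hprod : Complex.abs (Complex.Gamma (z + (δ:ℂ)) / Complex.Gamma z)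
      * Complex.abs Jv = G0 := by
    rw [← map_mul]
    have hq : Complex.Gamma (z + (δ:ℂ)) / Complex.Gamma z * Jv = Complex.Gamma (δ:ℂ) := by
      rw [hJv]; field_simp
    rw [hq, Complex.Gamma_ofReal, Complex.abs_ofReal, abs_of_pos hG0]
  have hr : Complex.abs (Complex.Gamma (z + (δ:ℂ)) / Complex.Gamma z)
      = G0 / Complex.abs Jv := by
    rw [eq_div_iff hJpos.ne']; exact hprod
  have hAδpos : 0 < A ^ δ := Real.rpow_pos_of_pos hA0 δ
  have hy : x * A ^ δ = 1 := by
    rw [hx, ← Real.rpow_add hA0]; simp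
  constructor
  · rw [hr, le_div_iff₀ hJpos]
    nlinarith [mul_le_mul_of_nonneg_left hJhigh hAδpos.le, hy]
  · rw [hr, div_le_iff₀ hJpos]
    nlinarith [mul_le_mul_of_nonneg_left hJlow hAδpos.le, hy]

lemma Gamma_shift (s : ℂ) (n : ℕ) (h : ∀ k : ℕ, k < n → s + k ≠ 0) :
    Complex.Gamma (s + n) = (∏ k ∈ Finset.range n, (s + k)) * Complex.Gamma s := by
  induction n with
  | zero => simp
  | succ n ih =>
    have hsn : s + n ≠ 0 := h n (Nat.lt_succ_self n)
    have he : (s + ((n:ℕ)+1 : ℕ) : ℂ) = (s + n) + 1 := by push_cast; ring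
    rw [he, Complex.Gamma_add_one _ hsn, ih (fun k hk => h k (Nat.lt_succ_of_lt hk)),
      Finset.prod_range_succ]
    ring

lemma div_alg {a1 a2 b1 b2 p1 p2 q1 q2 : ℝ} (hb1 : b1 ≠ 0) (hb2 : b2 ≠ 0)
    (hp1 : p1 ≠ 0) (hp2 : p2 ≠ 0) (hq1 : q1 ≠ 0) (hq2 : q2 ≠ 0) :
    (a1*a2)/(b1*b2) = ((q1*a1)/(p1*b1)) * ((q2*a2)/(p2*b2)) * ((p1*p2)/(q1*q2)) := by
  field_simp

lemma abs_add_shift {w : ℂ} {b : ℝ} (c : ℂ) (hc : Complex.abs c ≤ b)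
    (h2 : 2*b ≤ Complex.abs w) :
    Complex.abs w / 2 ≤ Complex.abs (c + w) ∧ Complex.abs (c + w) ≤ 2 * Complex.abs w := by
  have hb : 0 ≤ b := le_trans (Complex.abs.nonneg c) hc
  have h1 : Complex.abs (c + w) ≤ Complex.abs c + Complex.abs w := Complex.abs.add_le c w
  have h2' : Complex.abs w - Complex.abs c ≤ Complex.abs (c + w) := by
    have hwe : w = (c + w) - c := by ring
    have : Complex.abs w ≤ Complex.abs (c + w) + Complex.abs c := by
      nth_rewrite 1 [hwe]
      rw [← Complex.norm_eq_abs, ← Complex.norm_eq_abs, ← Complex.norm_eq_abs]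
      exact norm_sub_le _ _
    linarith
  constructor <;> linarith

end Stmt17P

/-- The Gamma-ratio `Γ(1-β+R-iζ)Γ(α+R-iζ)/(Γ(1-α+R-iζ)Γ(β+R-iζ))`. -/
noncomputable def gammaRatio17 (α β R ζ : ℝ) : ℂ :=
  Complex.Gamma (((1 - β + R : ℝ) : ℂ) - (ζ : ℂ) * Complex.I) *
      Complex.Gamma (((α + R : ℝ) : ℂ) - (ζ : ℂ) * Complex.I) /
    (Complex.Gamma (((1 - α + R : ℝ) : ℂ) - (ζ : ℂ) * Complex.I) *
      Complex.Gamma (((β + R : ℝ) : ℂ) - (ζ : ℂ) * Complex.I))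

set_option maxHeartbeats 1000000 in
open Stmt17P in
/-- Stirling asymptotics: for `0 < α - β < 1` and `z = iR + ζ` with `R²+ζ²`
sufficiently large,
`|Γ(1-β+R-iζ)Γ(α+R-iζ)/(Γ(1-α+R-iζ)Γ(β+R-iζ))| ≍ (R²+ζ²)^{α-β}`
up to constants depending only on `α, β`. -/
theorem stmt17 (α β : ℝ) (h1 : 0 < α - β) (h2 : α - β < 1) :
    ∃ R₀ C₁ C₂ : ℝ, 0 < R₀ ∧ 0 < C₁ ∧ 0 < C₂ ∧
      ∀ R ζ : ℝ, 0 ≤ R → R₀ ^ 2 ≤ R ^ 2 + ζ ^ 2 →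
        C₁ * (R ^ 2 + ζ ^ 2) ^ (α - β) ≤ ‖gammaRatio17 α β R ζ‖ ∧
          ‖gammaRatio17 α β R ζ‖ ≤ C₂ * (R ^ 2 + ζ ^ 2) ^ (α - β) := by
  set δ := α - β with hδ
  have hδ0 : 0 < δ := h1
  have hδ1 : δ < 1 := h2
  obtain ⟨M, hM1, hcore⟩ := core hδ0 hδ1
  set m : ℕ := ⌈|α| + |β| + 2⌉₊ with hmdef
  have hm : |α| + |β| + 2 ≤ (m:ℝ) := Nat.le_ceil _
  set L : ℝ := |α| + |β| + 1 with hLdef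
  have hL0 : 0 < L := by positivity
  set B : ℝ := (m:ℝ) + L with hBdef
  have hB0 : 0 < B := by positivity
  have hmL : L + 1 ≤ (m:ℝ) := by rw [hLdef]; linarith
  refine ⟨2*M + 4*B + 4, 1/(9 * 16^m), 16 * 16^m,
    by positivity, by positivity, by positivity, ?_⟩
  intro R ζ hR hRζ
  simp only [Complex.norm_eq_abs]
  set w : ℂ := (R:ℂ) - (ζ:ℂ) * Complex.I with hw
  have hwre : w.re = R := by simp [hw]
  have hwim : w.im = -ζ := by simp [hw]
  set A := Complex.abs w with hA
  have hAnn : 0 ≤ A := Complex.abs.nonneg w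
  have hAsq : A^2 = R^2 + ζ^2 := by
    rw [hA, Complex.sq_abs, Complex.normSq_apply, hwre, hwim]; ring
  have hR₀A : 2*M + 4*B + 4 ≤ A := by
    by_contra hcon
    push_neg at hcon
    have h0 : (0:ℝ) ≤ 2*M + 4*B + 4 := by linarith
    have hsq := pow_lt_pow_left₀ hcon hAnn (n := 2) two_ne_zero
    rw [hAsq] at hsq
    linarith
  have hA2M : 2*M ≤ A := by linarith
  have hA2B : 2*B ≤ A := by linarith
  have hA0 : 0 < A := by linarith
  -- exponent bookkeeping
  have hAδpos : 0 < A ^ δ := Real.rpow_pos_of_pos hA0 δ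
  have hexp : (R^2 + ζ^2) ^ δ = A^δ * A^δ := by
    rw [← hAsq, sq, ← Real.mul_rpow hAnn hAnn]
  -- per-factor bounds
  have hfac : ∀ c : ℝ, |c| ≤ L → ∀ k ∈ Finset.range m,
      A/2 ≤ Complex.abs ((c:ℂ) + w + (k:ℕ)) ∧ Complex.abs ((c:ℂ) + w + (k:ℕ)) ≤ 2*A := by
    intro c hc k hk
    rw [Finset.mem_range] at hk
    have hkm : (k:ℝ) + 1 ≤ (m:ℝ) := by exact_mod_cast hk
    have he : ((c:ℂ) + w + (k:ℕ)) = (((c + k : ℝ)):ℂ) + w := by push_cast; ring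
    rw [he]
    refine abs_add_shift (b := B) _ ?_ hA2B
    rw [Complex.abs_ofReal]
    calc |c + (k:ℝ)| ≤ |c| + |(k:ℝ)| := abs_add_le _ _
      _ = |c| + (k:ℝ) := by rw [abs_of_nonneg (Nat.cast_nonneg k : (0:ℝ) ≤ (k:ℝ))]
      _ ≤ B := by rw [hBdef]; linarith
  have hfacne : ∀ c : ℝ, |c| ≤ L → ∀ k : ℕ, k < m → (c:ℂ) + w + (k:ℕ) ≠ 0 := by
    intro c hc k hk h0
    have := (hfac c hc k (Finset.mem_range.mpr hk)).1
    rw [h0, map_zero] at this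
    linarith
  -- products
  set P : ℝ → ℝ := fun c => ∏ k ∈ Finset.range m, Complex.abs ((c:ℂ) + w + (k:ℕ)) with hP
  have hPlow : ∀ c : ℝ, |c| ≤ L → (A/2)^m ≤ P c := by
    intro c hc
    rw [hP]
    calc (A/2)^m = ∏ _k ∈ Finset.range m, (A/2) := by rw [Finset.prod_const,
          Finset.card_range]
      _ ≤ _ := Finset.prod_le_prod (fun k _ => by positivity)
          (fun k hk => (hfac c hc k hk).1)
  have hPhigh : ∀ c : ℝ, |c| ≤ L → P c ≤ (2*A)^m := by
    intro c hc
    rw [hP]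
    calc (∏ k ∈ Finset.range m, Complex.abs ((c:ℂ) + w + (k:ℕ)))
        ≤ ∏ _k ∈ Finset.range m, (2*A) := Finset.prod_le_prod
          (fun k _ => Complex.abs.nonneg _) (fun k hk => (hfac c hc k hk).2)
      _ = (2*A)^m := by rw [Finset.prod_const, Finset.card_range]
  have hPpos : ∀ c : ℝ, |c| ≤ L → 0 < P c := by
    intro c hc
    refine lt_of_lt_of_le ?_ (hPlow c hc)
    positivity
  -- the four Gamma shift identities
  have hshift : ∀ c : ℝ, |c| ≤ L →
      Complex.abs (Complex.Gamma ((c:ℂ) + w + (m:ℕ)))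
        = P c * Complex.abs (Complex.Gamma ((c:ℂ) + w)) := by
    intro c hc
    rw [Gamma_shift ((c:ℂ) + w) m (fun k hk => hfacne c hc k hk), map_mul, hP]
    congr 1
    exact map_prod Complex.abs _ _
  -- the four constants are bounded by L
  have hcα : |α| ≤ L := by rw [hLdef]; linarith [abs_nonneg β]
  have hcβ : |β| ≤ L := by rw [hLdef]; linarith [abs_nonneg α]
  have hc1α : |1 - α| ≤ L := by
    rw [hLdef]
    calc |1 - α| ≤ |(1:ℝ)| + |α| := by
          rw [sub_eq_add_neg]; exact (abs_add_le 1 (-α)).trans_eq (by rw [abs_neg])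
      _ ≤ _ := by rw [abs_one]; linarith [abs_nonneg β]
  have hc1β : |1 - β| ≤ L := by
    rw [hLdef]
    calc |1 - β| ≤ |(1:ℝ)| + |β| := by
          rw [sub_eq_add_neg]; exact (abs_add_le 1 (-β)).trans_eq (by rw [abs_neg])
      _ ≤ _ := by rw [abs_one]; linarith [abs_nonneg α]
  -- shifted points
  set z₁ : ℂ := ((β:ℝ):ℂ) + w + (m:ℕ) with hz₁
  set z₂ : ℂ := ((1 - α:ℝ):ℂ) + w + (m:ℕ) with hz₂
  have hz₁δ : z₁ + (δ:ℂ) = ((α:ℝ):ℂ) + w + (m:ℕ) := by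
    rw [hz₁, hδ]; push_cast; ring
  have hz₂δ : z₂ + (δ:ℂ) = ((1 - β:ℝ):ℂ) + w + (m:ℕ) := by
    rw [hz₂, hδ]; push_cast; ring
  have hz₁re : 1 ≤ z₁.re := by
    rw [hz₁]
    simp only [Complex.add_re, Complex.ofReal_re, Complex.natCast_re, hwre]
    have h := abs_le.mp hcβ
    linarith
  have hz₂re : 1 ≤ z₂.re := by
    rw [hz₂]
    simp only [Complex.add_re, Complex.ofReal_re, Complex.natCast_re, hwre]
    have h := abs_le.mp hc1α
    linarith
  have hz₁abs : A/2 ≤ Complex.abs z₁ ∧ Complex.abs z₁ ≤ 2*A := by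
    have he : z₁ = (((β + m : ℝ)):ℂ) + w := by rw [hz₁]; push_cast; ring
    rw [he]
    refine abs_add_shift _ ?_ hA2B
    rw [Complex.abs_ofReal]
    calc |β + (m:ℝ)| ≤ |β| + |(m:ℝ)| := abs_add_le _ _
      _ ≤ B := by rw [hBdef, abs_of_nonneg (Nat.cast_nonneg m : (0:ℝ) ≤ (m:ℝ))]; linarith
  have hz₂abs : A/2 ≤ Complex.abs z₂ ∧ Complex.abs z₂ ≤ 2*A := by
    have he : z₂ = (((1 - α + m : ℝ)):ℂ) + w := by rw [hz₂]; push_cast; ring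
    rw [he]
    refine abs_add_shift _ ?_ hA2B
    rw [Complex.abs_ofReal]
    calc |1 - α + (m:ℝ)| ≤ |1 - α| + |(m:ℝ)| := abs_add_le _ _
      _ ≤ B := by rw [hBdef, abs_of_nonneg (Nat.cast_nonneg m : (0:ℝ) ≤ (m:ℝ))]; linarith
  have hMz₁ : M ≤ Complex.abs z₁ := le_trans (by linarith) hz₁abs.1
  have hMz₂ : M ≤ Complex.abs z₂ := le_trans (by linarith) hz₂abs.1
  obtain ⟨hX1low, hX1high⟩ := hcore z₁ hz₁re hMz₁
  obtain ⟨hX2low, hX2high⟩ := hcore z₂ hz₂re hMz₂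
  -- convert |z_i|^δ bounds to A^δ bounds
  have h2δ : (2:ℝ)^δ ≤ 2 := by
    calc (2:ℝ)^δ ≤ (2:ℝ)^(1:ℝ) := Real.rpow_le_rpow_of_exponent_le one_le_two hδ1.le
      _ = 2 := Real.rpow_one 2
  have h2δpos : (0:ℝ) < 2^δ := Real.rpow_pos_of_pos two_pos δ
  have hhalf : A^δ/2 ≤ (A/2)^δ := by
    rw [Real.div_rpow hAnn (by norm_num : (0:ℝ) ≤ 2)]
    gcongr
  have hdouble : (2*A)^δ ≤ 2*A^δ := by
    rw [Real.mul_rpow (by norm_num : (0:ℝ) ≤ 2) hAnn]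
    exact mul_le_mul_of_nonneg_right h2δ (Real.rpow_nonneg hAnn δ)
  -- rpow bounds for |z_i|
  have hz₁δA : A^δ/2 ≤ Complex.abs z₁ ^ δ :=
    le_trans hhalf (Real.rpow_le_rpow (by positivity) hz₁abs.1 hδ0.le)
  have hz₂δA : A^δ/2 ≤ Complex.abs z₂ ^ δ :=
    le_trans hhalf (Real.rpow_le_rpow (by positivity) hz₂abs.1 hδ0.le)
  have hz₁δA2 : Complex.abs z₁ ^ δ ≤ 2*A^δ :=
    le_trans (Real.rpow_le_rpow (Complex.abs.nonneg _) hz₁abs.2 hδ0.le) hdouble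
  have hz₂δA2 : Complex.abs z₂ ^ δ ≤ 2*A^δ :=
    le_trans (Real.rpow_le_rpow (Complex.abs.nonneg _) hz₂abs.2 hδ0.le) hdouble
  rw [map_div₀] at hX1low hX1high hX2low hX2high
  set X := Complex.abs (Complex.Gamma (z₂ + (δ:ℂ))) / Complex.abs (Complex.Gamma z₂) with hXdef
  set Y := Complex.abs (Complex.Gamma (z₁ + (δ:ℂ))) / Complex.abs (Complex.Gamma z₁) with hYdef
  have hXlow : A^δ/3 ≤ X := by linarith only [hX2low, hz₂δA]
  have hYlow : A^δ/3 ≤ Y := by linarith only [hX1low, hz₁δA]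
  have hXhigh : X ≤ 4*A^δ := by linarith only [hX2high, hz₂δA2]
  have hYhigh : Y ≤ 4*A^δ := by linarith only [hX1high, hz₁δA2]
  -- gamma nonvanishing and positivity of pieces
  have hΓz₁ : Complex.Gamma z₁ ≠ 0 :=
    Complex.Gamma_ne_zero_of_re_pos (by linarith only [hz₁re])
  have hΓz₂ : Complex.Gamma z₂ ≠ 0 :=
    Complex.Gamma_ne_zero_of_re_pos (by linarith only [hz₂re])
  have hΓz₁δ : Complex.Gamma (z₁ + (δ:ℂ)) ≠ 0 := by
    apply Complex.Gamma_ne_zero_of_re_pos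
    simp only [Complex.add_re, Complex.ofReal_re]
    linarith only [hz₁re, hδ0]
  have hΓz₂δ : Complex.Gamma (z₂ + (δ:ℂ)) ≠ 0 := by
    apply Complex.Gamma_ne_zero_of_re_pos
    simp only [Complex.add_re, Complex.ofReal_re]
    linarith only [hz₂re, hδ0]
  -- shift identities specialized
  have Hα := hshift α hcα
  have Hβ := hshift β hcβ
  have H1α := hshift (1-α) hc1α
  have H1β := hshift (1-β) hc1β
  rw [← hz₁δ] at Hα
  rw [← hz₁] at Hβ
  rw [← hz₂] at H1α
  rw [← hz₂δ] at H1β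
  have hPα := hPpos α hcα
  have hPβ := hPpos β hcβ
  have hP1α := hPpos (1-α) hc1α
  have hP1β := hPpos (1-β) hc1β
  have hb2 : 0 < Complex.abs (Complex.Gamma (((β:ℝ):ℂ) + w)) := by
    have h := Complex.abs.pos hΓz₁
    rw [Hβ] at h
    rcases mul_pos_iff.mp h with ⟨_, hb⟩ | ⟨hneg, _⟩
    · exact hb
    · exact absurd hPβ (not_lt.mpr hneg.le)
  have hb1 : 0 < Complex.abs (Complex.Gamma (((1-α:ℝ):ℂ) + w)) := by
    have h := Complex.abs.pos hΓz₂
    rw [H1α] at h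
    rcases mul_pos_iff.mp h with ⟨_, hb⟩ | ⟨hneg, _⟩
    · exact hb
    · exact absurd hP1α (not_lt.mpr hneg.le)
  -- rewrite gammaRatio17
  have e1 : ((1 - β + R : ℝ) : ℂ) - (ζ:ℂ) * Complex.I = ((1-β : ℝ):ℂ) + w := by
    rw [hw]; push_cast; ring
  have e2 : ((α + R : ℝ) : ℂ) - (ζ:ℂ) * Complex.I = ((α : ℝ):ℂ) + w := by
    rw [hw]; push_cast; ring
  have e3 : ((1 - α + R : ℝ) : ℂ) - (ζ:ℂ) * Complex.I = ((1-α : ℝ):ℂ) + w := by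
    rw [hw]; push_cast; ring
  have e4 : ((β + R : ℝ) : ℂ) - (ζ:ℂ) * Complex.I = ((β : ℝ):ℂ) + w := by
    rw [hw]; push_cast; ring
  have hGR : Complex.abs (gammaRatio17 α β R ζ)
      = (Complex.abs (Complex.Gamma (((1-β:ℝ):ℂ) + w))
          * Complex.abs (Complex.Gamma (((α:ℝ):ℂ) + w)))
        / (Complex.abs (Complex.Gamma (((1-α:ℝ):ℂ) + w))
          * Complex.abs (Complex.Gamma (((β:ℝ):ℂ) + w))) := by
    rw [gammaRatio17, e1, e2, e3, e4, map_div₀, map_mul, map_mul]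
  set Q : ℝ := (P (1-α) * P β) / (P (1-β) * P α) with hQdef
  have hXeq : X = (P (1-β) * Complex.abs (Complex.Gamma (((1-β:ℝ):ℂ) + w)))
      / (P (1-α) * Complex.abs (Complex.Gamma (((1-α:ℝ):ℂ) + w))) := by
    rw [hXdef, H1β, H1α]
  have hYeq : Y = (P α * Complex.abs (Complex.Gamma (((α:ℝ):ℂ) + w)))
      / (P β * Complex.abs (Complex.Gamma (((β:ℝ):ℂ) + w))) := by
    rw [hYdef, Hα, Hβ]
  have hE : Complex.abs (gammaRatio17 α β R ζ) = X * Y * Q := by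
    rw [hGR, hXeq, hYeq, hQdef]
    exact div_alg hb1.ne' hb2.ne' hP1α.ne' hPβ.ne' hP1β.ne' hPα.ne'
  -- bounds on Q
  have h4m : (2*A)^m = 4^m * (A/2)^m := by
    rw [← mul_pow]; congr 1; ring
  have h16 : (4:ℝ)^m * 4^m = 16^m := by rw [← mul_pow]; norm_num
  have hplpos : (0:ℝ) < (A/2)^m := by positivity
  have hdenpos : 0 < P (1-β) * P α := mul_pos hP1β hPα
  have hQlow : 1/(16:ℝ)^m ≤ Q := by
    rw [hQdef, le_div_iff₀ hdenpos]
    calc 1/(16:ℝ)^m * (P (1-β) * P α)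
        ≤ 1/(16:ℝ)^m * ((2*A)^m * (2*A)^m) := by
          apply mul_le_mul_of_nonneg_left _ (by positivity)
          exact mul_le_mul (hPhigh _ hc1β) (hPhigh _ hcα) hPα.le (by positivity)
      _ = (A/2)^m * (A/2)^m := by
          rw [h4m, show ((4:ℝ)^m*(A/2)^m)*((4:ℝ)^m*(A/2)^m)
            = ((4:ℝ)^m*4^m)*((A/2)^m*(A/2)^m) by ring, h16]
          field_simp
      _ ≤ P (1-α) * P β :=
          mul_le_mul (hPlow _ hc1α) (hPlow _ hcβ) hplpos.le
            (le_trans hplpos.le (hPlow _ hc1α))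
  have hQhigh : Q ≤ (16:ℝ)^m := by
    rw [hQdef, div_le_iff₀ hdenpos]
    calc P (1-α) * P β ≤ (2*A)^m * (2*A)^m :=
          mul_le_mul (hPhigh _ hc1α) (hPhigh _ hcβ) hPβ.le (by positivity)
      _ = (16:ℝ)^m * ((A/2)^m * (A/2)^m) := by
          rw [h4m, show ((4:ℝ)^m*(A/2)^m)*((4:ℝ)^m*(A/2)^m)
            = ((4:ℝ)^m*4^m)*((A/2)^m*(A/2)^m) by ring, h16]
      _ ≤ (16:ℝ)^m * (P (1-β) * P α) := by
          apply mul_le_mul_of_nonneg_left _ (by positivity)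
          exact mul_le_mul (hPlow _ hc1β) (hPlow _ hcα) hplpos.le
            (le_trans hplpos.le (hPlow _ hc1β))
  have hQpos : 0 < Q := lt_of_lt_of_le (by positivity) hQlow
  -- final chains
  have hXpos : 0 < X := lt_of_lt_of_le (by positivity) hXlow
  have hYpos : 0 < Y := lt_of_lt_of_le (by positivity) hYlow
  rw [hE, hexp]
  constructor
  · calc 1/(9 * (16:ℝ)^m) * (A^δ * A^δ)
        = (A^δ/3) * (A^δ/3) * (1/(16:ℝ)^m) := by ring
      _ ≤ X * Y * Q := by
          apply mul_le_mul _ hQlow (by positivity) (by positivity)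
          exact mul_le_mul hXlow hYlow (by positivity) hXpos.le
  · calc X * Y * Q ≤ (4*A^δ) * (4*A^δ) * (16:ℝ)^m := by
          apply mul_le_mul _ hQhigh hQpos.le (by positivity)
          exact mul_le_mul hXhigh hYhigh hYpos.le (by positivity)
      _ = 16 * (16:ℝ)^m * (A^δ * A^δ) := by ring
end
end

section
/- For Q₀ = -(N-2γ)/2 + 2γ/(p-1), the hypergeometric expression ρ*(ρ) = [α⁻¹ (4ρ/(4+ρ²))^{(N-2γ)/2} ₂F₁(γ/(p-1), (N-2γ)/2 - γ/(p-1); N/2; ((4-ρ²)/(4+ρ²))²)]^{2/(N-2γ)} is strictly increasing in ρ ∈ (0,2), where α = Γ(N/2)Γ(γ)/(Γ(γ + γ/(p-1))Γ(N/2 - γ/(p-1))). Equivalently, the function f(η) = (1-η)^{(N-2γ)/4} ₂F₁(γ/(p-1), (N-2γ)/2 - γ/(p-1); N/2; η) is strictly decreasing for η ∈ (0,1). -/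
open Filter Topology Set

/-- The Gauss hypergeometric function `₂F₁(a,b;c;x)` defined by its power
series `Σ_n (a)_n (b)_n / (c)_n · x^n/n!`, written via Gamma functions. -/
noncomputable def hyperg (a b c x : ℝ) : ℝ :=
  ∑' n : ℕ,
    Real.Gamma (a + n) * Real.Gamma (b + n) * Real.Gamma c /
      (Real.Gamma a * Real.Gamma b * Real.Gamma (c + n)) * x ^ n / (n.factorial : ℝ)

/-- The `n`-th Taylor coefficient of `₂F₁(a,b;c;·)`. -/
noncomputable def hcoef (a b c : ℝ) (n : ℕ) : ℝ :=
  Real.Gamma (a + n) * Real.Gamma (b + n) * Real.Gamma c /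
    (Real.Gamma a * Real.Gamma b * Real.Gamma (c + n)) / (n.factorial : ℝ)

lemma hyperg_eq (a b c x : ℝ) : hyperg a b c x = ∑' n : ℕ, hcoef a b c n * x ^ n :=
  tsum_congr fun n => by rw [hcoef]; ring

lemma hcoef_pos {a b c : ℝ} (ha : 0 < a) (hb : 0 < b) (hc : 0 < c) (n : ℕ) :
    0 < hcoef a b c n := by
  have h1 : (0:ℝ) < a + n := by positivity
  have h2 : (0:ℝ) < b + n := by positivity
  have h3 : (0:ℝ) < c + n := by positivity
  unfold hcoef
  have := Real.Gamma_pos_of_pos h1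
  have := Real.Gamma_pos_of_pos h2
  have := Real.Gamma_pos_of_pos h3
  have := Real.Gamma_pos_of_pos ha
  have := Real.Gamma_pos_of_pos hb
  have := Real.Gamma_pos_of_pos hc
  have : (0:ℝ) < n.factorial := by positivity
  positivity

lemma hcoef_succ {a b c : ℝ} (ha : 0 < a) (hb : 0 < b) (hc : 0 < c) (n : ℕ) :
    hcoef a b c (n + 1) = hcoef a b c n * ((a + n) * (b + n) / ((c + n) * (n + 1))) := by
  have h1 : (0:ℝ) < a + n := by positivity
  have h2 : (0:ℝ) < b + n := by positivity
  have h3 : (0:ℝ) < c + n := by positivity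
  have g1 : Real.Gamma (a + (n + 1 : ℕ)) = (a + n) * Real.Gamma (a + n) := by
    push_cast; rw [show a + ((n:ℝ)+1) = (a + n) + 1 by ring, Real.Gamma_add_one h1.ne']
  have g2 : Real.Gamma (b + (n + 1 : ℕ)) = (b + n) * Real.Gamma (b + n) := by
    push_cast; rw [show b + ((n:ℝ)+1) = (b + n) + 1 by ring, Real.Gamma_add_one h2.ne']
  have g3 : Real.Gamma (c + (n + 1 : ℕ)) = (c + n) * Real.Gamma (c + n) := by
    push_cast; rw [show c + ((n:ℝ)+1) = (c + n) + 1 by ring, Real.Gamma_add_one h3.ne']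
  have hfac : ((n+1).factorial : ℝ) = (n+1) * (n.factorial : ℝ) := by
    rw [Nat.factorial_succ]; push_cast; ring
  have hΓa := (Real.Gamma_pos_of_pos ha).ne'
  have hΓb := (Real.Gamma_pos_of_pos hb).ne'
  have hΓc := (Real.Gamma_pos_of_pos hc).ne'
  have hΓ3 := (Real.Gamma_pos_of_pos h3).ne'
  have hfn : (n.factorial : ℝ) ≠ 0 := by positivity
  unfold hcoef
  rw [g1, g2, g3, hfac]
  field_simp

lemma tendsto_shift_div (x y : ℝ) :
    Filter.Tendsto (fun n : ℕ => (x + n) / (y + n)) Filter.atTop (𝓝 1) := by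
  have h0 : Filter.Tendsto (fun n : ℕ => ((x / n) + 1) / ((y / n) + 1)) Filter.atTop
      (𝓝 ((0 + 1) / (0 + 1))) := by
    apply Filter.Tendsto.div
    · exact (tendsto_const_div_atTop_nhds_zero_nat x).add tendsto_const_nhds
    · exact (tendsto_const_div_atTop_nhds_zero_nat y).add tendsto_const_nhds
    · norm_num
  simp only [zero_add, div_one] at h0
  apply h0.congr'
  filter_upwards [Filter.eventually_gt_atTop 0] with n hn
  have hn' : (n:ℝ) ≠ 0 := by positivity
  rcases eq_or_ne (y + n) 0 with h | h
  · rw [h, div_zero, show y / n + 1 = (y + n)/n by field_simp, h, zero_div, div_zero]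
  · field_simp

lemma summable_A {a b c : ℝ} (ha : 0 < a) (hb : 0 < b) (hc : 0 < c) {r : ℝ}
    (hr0 : 0 < r) (hr1 : r < 1) :
    Summable (fun n : ℕ => ((n:ℝ) + 1) * hcoef a b c (n + 1) * r ^ n) := by
  set f : ℕ → ℝ := fun n => ((n:ℝ) + 1) * hcoef a b c (n + 1) * r ^ n with hf
  have hfpos : ∀ n, 0 < f n := fun n => by
    have := hcoef_pos ha hb hc (n+1); positivity
  apply summable_of_ratio_test_tendsto_lt_one hr1
    (Filter.Eventually.of_forall fun n => (hfpos n).ne')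
  have hratio : ∀ n : ℕ, ‖f (n+1)‖ / ‖f n‖ =
      ((a + 1 + n) / (1 + n)) * ((b + 1 + n) / (c + 1 + n)) * r := by
    intro n
    rw [Real.norm_of_nonneg (hfpos (n+1)).le, Real.norm_of_nonneg (hfpos n).le, hf]
    simp only
    rw [hcoef_succ ha hb hc (n+1)]
    have h1 : (0:ℝ) < a + (n+1:ℕ) := by positivity
    have h2 : (0:ℝ) < b + (n+1:ℕ) := by positivity
    have h3 : (0:ℝ) < c + (n+1:ℕ) := by positivity
    have hcoefpos := hcoef_pos ha hb hc (n+1)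
    have hrn : (0:ℝ) < r ^ n := by positivity
    push_cast
    field_simp
    ring
  rw [show (𝓝 r) = 𝓝 (1 * 1 * r) by norm_num]
  apply Filter.Tendsto.congr (fun n => (hratio n).symm)
  refine Filter.Tendsto.mul_const r (Filter.Tendsto.mul ?_ ?_)
  · exact tendsto_shift_div (a+1) 1
  · exact tendsto_shift_div (b+1) (c+1)

lemma summable_F {a b c : ℝ} (ha : 0 < a) (hb : 0 < b) (hc : 0 < c) {x : ℝ}
    (hx0 : 0 < x) (hx1 : x < 1) :
    Summable (fun n : ℕ => hcoef a b c n * x ^ n) := by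
  rw [← summable_nat_add_iff 1]
  apply Summable.of_nonneg_of_le
    (fun n => by have := hcoef_pos ha hb hc (n+1); positivity)
    (fun n => ?_) (summable_A ha hb hc hx0 hx1)
  have h1 := hcoef_pos ha hb hc (n+1)
  have hxn : (0:ℝ) < x ^ n := by positivity
  calc hcoef a b c (n+1) * x ^ (n+1) = x * (hcoef a b c (n+1) * x ^ n) := by ring
    _ ≤ 1 * (((n:ℝ)+1) * (hcoef a b c (n+1) * x ^ n)) := by
        apply mul_le_mul hx1.le
          (by nlinarith [mul_pos h1 hxn, (Nat.cast_nonneg (α := ℝ) n)])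
          (by positivity) (by norm_num)
    _ = ((n:ℝ)+1) * hcoef a b c (n+1) * x ^ n := by ring

lemma summable_D {a b c : ℝ} (ha : 0 < a) (hb : 0 < b) (hc : 0 < c) {x : ℝ}
    (hx0 : 0 < x) (hx1 : x < 1) :
    Summable (fun n : ℕ => hcoef a b c n * ((n:ℝ) * x ^ (n - 1))) := by
  rw [← summable_nat_add_iff 1]
  exact ((summable_A ha hb hc hx0 hx1).congr (fun n => by push_cast; ring))

lemma hasDerivAt_F {a b c : ℝ} (ha : 0 < a) (hb : 0 < b) (hc : 0 < c) {x : ℝ}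
    (hx0 : 0 < x) (hx1 : x < 1) :
    HasDerivAt (fun y => ∑' n : ℕ, hcoef a b c n * y ^ n)
      (∑' n : ℕ, hcoef a b c n * ((n:ℝ) * x ^ (n - 1))) x := by
  set r : ℝ := (1 + x) / 2 with hr
  have hxr : x < r := by rw [hr]; linarith
  have hr0 : 0 < r := by rw [hr]; linarith
  have hr1 : r < 1 := by rw [hr]; linarith
  set u : ℕ → ℝ := fun n => hcoef a b c n * ((n:ℝ) * r ^ (n - 1)) with hu
  have hU : Summable u := by
    rw [hu, ← summable_nat_add_iff 1]
    exact ((summable_A ha hb hc hr0 hr1).congr (fun n => by push_cast; ring))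
  refine hasDerivAt_tsum_of_isPreconnected hU (isOpen_Ioo (a := -r) (b := r))
    ((convex_Ioo _ _).isPreconnected)
    (fun n y _ => (hasDerivAt_pow n y).const_mul (hcoef a b c n))
    (fun n y hy => ?_) (show (0:ℝ) ∈ Ioo (-r) r by constructor <;> linarith)
    ?_ (show x ∈ Ioo (-r) r by constructor <;> linarith)
  · have hcp := (hcoef_pos ha hb hc n).le
    have hyr : |y| ≤ r := by
      rw [abs_le]; exact ⟨(hy.1).le, (hy.2).le⟩
    simp only [hu, norm_mul, Real.norm_eq_abs, abs_of_nonneg hcp,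
      abs_of_nonneg (Nat.cast_nonneg (α := ℝ) n), abs_pow]
    gcongr
  · apply summable_of_ne_finset_zero (s := {0})
    intro n hn
    simp only [Finset.mem_singleton] at hn
    rw [zero_pow hn, mul_zero]

lemma bracket_neg {a b c β : ℝ} (ha : 0 < a) (hb : 0 < b) (hc : 0 < c) (hβ : 0 < β)
    (hab : a + b = 2 * β) (hβc : β < c) {x : ℝ} (hx0 : 0 < x) (hx1 : x < 1) :
    (1 - x) * (∑' n : ℕ, hcoef a b c n * ((n:ℝ) * x ^ (n - 1))) -
      β * ∑' n : ℕ, hcoef a b c n * x ^ n < 0 := by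
  set A : ℕ → ℝ := fun n => ((n:ℝ) + 1) * hcoef a b c (n + 1) * x ^ n with hAdef
  set B : ℕ → ℝ := fun n => (n:ℝ) * hcoef a b c n * x ^ n with hBdef
  have hA : Summable A := summable_A ha hb hc hx0 hx1
  have hB : Summable B := by
    rw [hBdef, ← summable_nat_add_iff 1]
    exact (hA.mul_left x).congr (fun n => by push_cast; ring)
  have hF : Summable (fun n : ℕ => hcoef a b c n * x ^ n) := summable_F ha hb hc hx0 hx1
  have hD : Summable (fun n : ℕ => hcoef a b c n * ((n:ℝ) * x ^ (n - 1))) :=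
    summable_D ha hb hc hx0 hx1
  have hDeq : ∑' n : ℕ, hcoef a b c n * ((n:ℝ) * x ^ (n - 1)) = ∑' n, A n := by
    rw [Summable.tsum_eq_zero_add hD]
    simp only [Nat.cast_zero, zero_mul, mul_zero, zero_add, Nat.add_sub_cancel]
    exact tsum_congr fun n => by push_cast; ring
  have hxDeq : ∑' n, B n = x * ∑' n, A n := by
    rw [Summable.tsum_eq_zero_add hB, ← tsum_mul_left]
    simp only [hBdef, Nat.cast_zero, zero_mul, zero_add]
    exact tsum_congr fun n => by push_cast; ring
  have key : ∀ n : ℕ, A n - B n - β * (hcoef a b c n * x ^ n) < 0 := by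
    intro n
    have hcn := hcoef_pos ha hb hc n
    have hc3 : (0:ℝ) < c + n := by positivity
    have hn1 : (0:ℝ) < (n:ℝ) + 1 := by positivity
    have hxn : (0:ℝ) < x ^ n := by positivity
    have hq : (a + n) * (b + n) < ((n:ℝ) + β) * (c + n) := by
      nlinarith [sq_nonneg (a - b), mul_nonneg (Nat.cast_nonneg (α := ℝ) n) (sub_pos.2 hβc).le,
        mul_pos hβ (sub_pos.2 hβc)]
    have h2 : (a + n) * (b + n) / (c + n) < (n:ℝ) + β := by
      rw [div_lt_iff₀ hc3]; nlinarith [hq]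
    have heq : A n - B n - β * (hcoef a b c n * x ^ n) =
        hcoef a b c n * x ^ n * ((a + n) * (b + n) / (c + n) - ((n:ℝ) + β)) := by
      rw [hAdef]
      simp only [hBdef]
      rw [hcoef_succ ha hb hc n]
      field_simp
      ring
    rw [heq]
    exact mul_neg_of_pos_of_neg (by positivity) (by linarith)
  have hsum3 : Summable (fun n => A n - B n - β * (hcoef a b c n * x ^ n)) :=
    (hA.sub hB).sub (hF.mul_left β)
  have hneg : ∑' n, (A n - B n - β * (hcoef a b c n * x ^ n)) < 0 := by
    have h0 := Summable.tsum_lt_tsum (f := fun n => A n - B n - β * (hcoef a b c n * x ^ n))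
      (g := fun _ : ℕ => (0:ℝ)) (fun n => (key n).le) (key 0) hsum3 summable_zero
    simpa using h0
  calc (1 - x) * (∑' n : ℕ, hcoef a b c n * ((n:ℝ) * x ^ (n - 1))) -
      β * ∑' n : ℕ, hcoef a b c n * x ^ n
      = (∑' n, A n) - (∑' n, B n) - ∑' n : ℕ, β * (hcoef a b c n * x ^ n) := by
        rw [hDeq, hxDeq, tsum_mul_left]; ring
    _ = ∑' n, (A n - B n - β * (hcoef a b c n * x ^ n)) := by
        rw [Summable.tsum_sub (hA.sub hB) (hF.mul_left β), Summable.tsum_sub hA hB]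
    _ < 0 := hneg

lemma key_anti {a b c β : ℝ} (ha : 0 < a) (hb : 0 < b) (hc : 0 < c) (hβ : 0 < β)
    (hab : a + b = 2 * β) (hβc : β < c) :
    StrictAntiOn (fun x : ℝ => (1 - x) ^ β * ∑' n : ℕ, hcoef a b c n * x ^ n)
      (Ioo (0:ℝ) 1) := by
  have main : ∀ x ∈ Ioo (0:ℝ) 1, ∃ d : ℝ,
      HasDerivAt (fun y : ℝ => (1 - y) ^ β * ∑' n : ℕ, hcoef a b c n * y ^ n) d x ∧ d < 0 := by
    rintro x ⟨hx0, hx1⟩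
    have h1x : 0 < 1 - x := by linarith
    have hFd := hasDerivAt_F ha hb hc hx0 hx1
    have hR : HasDerivAt (fun y : ℝ => (1 - y) ^ β) (-1 * β * (1 - x) ^ (β - 1)) x := by
      have := ((hasDerivAt_id x).const_sub 1).rpow_const (p := β) (Or.inl h1x.ne')
      simpa using this
    refine ⟨_, hR.mul hFd, ?_⟩
    have hsplit : (1 - x) ^ β = (1 - x) ^ (β - 1) * (1 - x) := by
      nth_rewrite 1 [show β = (β - 1) + 1 by ring]
      rw [Real.rpow_add h1x, Real.rpow_one]
    have hbr := bracket_neg ha hb hc hβ hab hβc hx0 hx1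
    have hrw : -1 * β * (1 - x) ^ (β - 1) * (∑' n : ℕ, hcoef a b c n * x ^ n) +
        (1 - x) ^ β * (∑' n : ℕ, hcoef a b c n * ((n:ℝ) * x ^ (n - 1))) =
        (1 - x) ^ (β - 1) * ((1 - x) * (∑' n : ℕ, hcoef a b c n * ((n:ℝ) * x ^ (n - 1))) -
          β * ∑' n : ℕ, hcoef a b c n * x ^ n) := by
      rw [hsplit]; ring
    rw [hrw]
    exact mul_neg_of_pos_of_neg (Real.rpow_pos_of_pos h1x _) hbr
  apply strictAntiOn_of_deriv_neg (convex_Ioo 0 1)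
  · intro x hx
    obtain ⟨d, hd, _⟩ := main x hx
    exact hd.continuousAt.continuousWithinAt
  · intro x hx
    rw [interior_Ioo] at hx
    obtain ⟨d, hd, hdneg⟩ := main x hx
    rw [hd.deriv]
    exact hdneg

lemma eta_facts {ρ : ℝ} (h0 : 0 < ρ) (h2 : ρ < 2) :
    0 < ((4 - ρ^2)/(4+ρ^2))^2 ∧ ((4 - ρ^2)/(4+ρ^2))^2 < 1 := by
  have hd : (0:ℝ) < 4 + ρ^2 := by positivity
  have hn : (0:ℝ) < 4 - ρ^2 := by nlinarith
  have hlt : (4 - ρ^2)/(4+ρ^2) < 1 := by rw [div_lt_one hd]; nlinarith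
  have h01 : 0 < (4-ρ^2)/(4+ρ^2) := div_pos hn hd
  exact ⟨by positivity, by nlinarith [h01, hlt]⟩

lemma eta_anti {ρ₁ ρ₂ : ℝ} (h1 : 0 < ρ₁) (h2 : ρ₂ < 2) (h12 : ρ₁ < ρ₂) :
    ((4 - ρ₂^2)/(4+ρ₂^2))^2 < ((4 - ρ₁^2)/(4+ρ₁^2))^2 := by
  have hd1 : (0:ℝ) < 4 + ρ₁^2 := by positivity
  have hd2 : (0:ℝ) < 4 + ρ₂^2 := by positivity
  have hn2 : (0:ℝ) ≤ 4 - ρ₂^2 := by nlinarith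
  have h2' : (0:ℝ) ≤ (4-ρ₂^2)/(4+ρ₂^2) := div_nonneg hn2 hd2.le
  have hq : (4 - ρ₂^2)/(4+ρ₂^2) < (4 - ρ₁^2)/(4+ρ₁^2) := by
    rw [div_lt_div_iff₀ hd2 hd1]; nlinarith
  nlinarith [hq, h2']

lemma pow_val {ρ s : ℝ} (h0 : 0 < ρ) (h2 : ρ < 2) :
    (4 * ρ / (4 + ρ^2)) ^ s = (1 - ((4 - ρ^2)/(4+ρ^2))^2) ^ (s / 2) := by
  have hd : (0:ℝ) < 4 + ρ^2 := by positivity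
  have hdne : (4 + ρ^2) ≠ 0 := hd.ne'
  have ht0 : (0:ℝ) ≤ 4 * ρ / (4 + ρ^2) := by positivity
  have h1η : 1 - ((4 - ρ^2)/(4+ρ^2))^2 = (4 * ρ / (4 + ρ^2))^2 := by
    field_simp
    ring
  rw [h1η, ← Real.rpow_natCast (4 * ρ / (4 + ρ^2)) 2, ← Real.rpow_mul ht0]
  congr 1
  push_cast
  ring

/-- Monotonicity of the special defining function: the function
`f(η) = (1-η)^{(N-2γ)/4} ₂F₁(γ/(p-1), (N-2γ)/2 - γ/(p-1); N/2; η)` is strictly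
decreasing on `(0,1)`, and equivalently
`ρ*(ρ) = [α⁻¹ (4ρ/(4+ρ²))^{(N-2γ)/2} ₂F₁(γ/(p-1), (N-2γ)/2-γ/(p-1); N/2; ((4-ρ²)/(4+ρ²))²)]^{2/(N-2γ)}`
is strictly increasing on `(0,2)`, where
`α = Γ(N/2)Γ(γ)/(Γ(γ+γ/(p-1))Γ(N/2-γ/(p-1)))`. -/
theorem stmt19 (N : ℕ) (hN : 2 ≤ N) (γ p : ℝ) (hγ0 : 0 < γ) (hγ1 : γ < 1)
    (hNγ : 2 * γ < (N : ℝ))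
    (hp1 : (N : ℝ) / ((N : ℝ) - 2 * γ) < p)
    (hp2 : p < ((N : ℝ) + 2 * γ) / ((N : ℝ) - 2 * γ)) :
    StrictAntiOn
        (fun η : ℝ =>
          (1 - η) ^ (((N : ℝ) - 2 * γ) / 4) *
            hyperg (γ / (p - 1)) (((N : ℝ) - 2 * γ) / 2 - γ / (p - 1)) ((N : ℝ) / 2) η)
        (Set.Ioo 0 1) ∧
      StrictMonoOn
        (fun ρ : ℝ =>
          ((Real.Gamma ((N : ℝ) / 2) * Real.Gamma γ /
                (Real.Gamma (γ + γ / (p - 1)) * Real.Gamma ((N : ℝ) / 2 - γ / (p - 1))))⁻¹ *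
              (4 * ρ / (4 + ρ ^ 2)) ^ (((N : ℝ) - 2 * γ) / 2) *
              hyperg (γ / (p - 1)) (((N : ℝ) - 2 * γ) / 2 - γ / (p - 1)) ((N : ℝ) / 2)
                (((4 - ρ ^ 2) / (4 + ρ ^ 2)) ^ 2)) ^ (2 / ((N : ℝ) - 2 * γ)))
        (Set.Ioo 0 2) := by
  have hN0 : (0:ℝ) < N := by
    have h2 : (2:ℝ) ≤ (N:ℝ) := by exact_mod_cast hN
    linarith
  have hN2γ : (0:ℝ) < (N:ℝ) - 2 * γ := by linarith
  have hp : 1 < p := by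
    have h1 : (1:ℝ) < (N:ℝ) / ((N:ℝ) - 2*γ) := (one_lt_div hN2γ).2 (by linarith)
    linarith
  have hp0 : 0 < p - 1 := by linarith
  set a : ℝ := γ / (p - 1) with hadef
  set b : ℝ := ((N:ℝ) - 2 * γ) / 2 - a with hbdef
  set c : ℝ := (N:ℝ) / 2 with hcdef
  set β : ℝ := ((N:ℝ) - 2 * γ) / 4 with hβdef
  have ha : 0 < a := div_pos hγ0 hp0
  have hNp : (N:ℝ) < p * ((N:ℝ) - 2 * γ) := by
    rw [div_lt_iff₀ hN2γ] at hp1; exact hp1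
  have hb : 0 < b := by
    rw [hbdef, sub_pos, hadef, div_lt_iff₀ hp0]
    nlinarith [hNp]
  have hc : 0 < c := by rw [hcdef]; positivity
  have hβ : 0 < β := by rw [hβdef]; linarith
  have hab : a + b = 2 * β := by rw [hbdef, hβdef]; ring
  have hβc : β < c := by rw [hβdef, hcdef]; linarith
  have h1 := key_anti ha hb hc hβ hab hβc
  constructor
  · intro x hx y hy hxy
    simp only [hyperg_eq]
    exact h1 hx hy hxy
  · have hca : 0 < c - a := by
      have : a < 2 * β := by linarith [hb, hab]
      linarith [hβc, hβ]
    have hα : 0 < Real.Gamma c * Real.Gamma γ /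
        (Real.Gamma (γ + a) * Real.Gamma (c - a)) := by
      have := Real.Gamma_pos_of_pos hc
      have := Real.Gamma_pos_of_pos hγ0
      have := Real.Gamma_pos_of_pos (show 0 < γ + a by linarith)
      have := Real.Gamma_pos_of_pos hca
      positivity
    rintro ρ₁ ⟨hρ1a, hρ1b⟩ ρ₂ ⟨hρ2a, hρ2b⟩ h12
    have hfpos : ∀ {η : ℝ}, 0 < η → η < 1 →
        0 < (1 - η) ^ β * ∑' n : ℕ, hcoef a b c n * η ^ n := by
      intro η h0 h1'
      apply mul_pos (Real.rpow_pos_of_pos (by linarith) β)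
      apply Summable.tsum_pos (summable_F ha hb hc h0 h1')
        (fun n => by have := hcoef_pos ha hb hc n; positivity) 0
      have := hcoef_pos ha hb hc 0
      simpa using this
    obtain ⟨hη1a, hη1b⟩ := eta_facts hρ1a hρ1b
    obtain ⟨hη2a, hη2b⟩ := eta_facts hρ2a hρ2b
    have hηlt := eta_anti hρ1a hρ2b h12
    have hkey := h1 ⟨hη2a, hη2b⟩ ⟨hη1a, hη1b⟩ hηlt
    have hval : ∀ ρ : ℝ, 0 < ρ → ρ < 2 →
        (4 * ρ / (4 + ρ^2)) ^ (((N:ℝ) - 2*γ)/2) = (1 - ((4 - ρ^2)/(4+ρ^2))^2) ^ β := by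
      intro ρ h0 h2
      rw [pow_val h0 h2, hβdef]
      congr 1
      ring
    simp only [hyperg_eq, hval ρ₁ hρ1a hρ1b, hval ρ₂ hρ2a hρ2b]
    rw [mul_assoc, mul_assoc]
    have he : 0 < 2 / ((N:ℝ) - 2*γ) := by positivity
    refine Real.rpow_lt_rpow ?_ ?_ he
    · exact (mul_pos (inv_pos.2 hα) (hfpos hη1a hη1b)).le
    · exact mul_lt_mul_of_pos_left hkey (inv_pos.2 hα)
end
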